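/- arXiv:1404.6928 — 4 statements merged into one kernel-verified Lean document; each statement's English description precedes it below -/
import Mathlib

section
/- Let n ≥ 3 be an integer and let t⁺ denote max(t,0). Define F_A(x) = 2·x^n + n·x^(n−1)·(1−x) − ((2x−1)⁺)^n − n·((2x−1)⁺)^(n−1)·(1−x), and define the operator Ω on bounded measurable functions F : [0,1] → ℝ by ΩF(x) = F_A(x) − ∫_{max(2x−1,0)}^{x} ∫₀^{(1+y)/2 − x} 2n(n−1)·y^(n−2)·F(z) dz dy − ∫_{max( max(x−1/4,0), 2x−1 )}^{x} ∫₀^{min( 1/4 + y − x, (1+y)/2 − x )} 2n(n−1)·((3y − 2x − 2z)⁺)^(n−2)·F(z) dz dy + ∫_{max(1/2, 2x−1)}^{max(1/2, x)} ∫₀^{(1+y)/2 − x} 4n(n−1)·(2y−1)^(n−2)·F(z) dz dy. Then Ω is a contraction in the supremum norm with contraction constant at most 11/12: for all bounded measurable F₁, F₂ : [0,1] → ℝ and all x ∈ [0,1], |ΩF₁(x) − ΩF₂(x)| ≤ (11/12) · sup_{z ∈ [0,1]} |F₁(z) − F₂(z)|. -/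
open Set MeasureTheory intervalIntegral


lemma lem1 (m : ℕ) {t : ℝ} (h0 : 0 ≤ t) (h1 : t ≤ 1) :
    (m:ℝ) * t ^ m * (1 - t) ≤ 1 - t ^ m := by
  induction m with
  | zero => simp
  | succ k ih =>
    have hk : (0:ℝ) ≤ (k:ℝ) := Nat.cast_nonneg k
    have hp : (0:ℝ) ≤ t ^ k := pow_nonneg h0 k
    have hle : t ^ k ≤ 1 := pow_le_one₀ h0 h1
    push_cast
    rw [pow_succ]
    nlinarith [mul_nonneg hp (sub_nonneg.2 h1), mul_nonneg (mul_nonneg hk hp) (sub_nonneg.2 h1)]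

lemma lem2 (p : ℕ) (hp : 2 ≤ p) {t : ℝ} (h0 : 0 ≤ t) (h1 : t ≤ 1) :
    t ^ p * (2*((p:ℝ)+1) - ((p:ℝ)+2)*t) ≤ (p:ℝ) := by
  have h := lem1 p h0 h1
  have hp2 : ((p:ℝ)+2) ≤ (p:ℝ)*(p:ℝ) := by
    have : (2:ℝ) ≤ (p:ℝ) := by exact_mod_cast hp
    nlinarith
  have hnn : (0:ℝ) ≤ t ^ p * (1 - t) := mul_nonneg (pow_nonneg h0 p) (by linarith)
  nlinarith [mul_le_mul_of_nonneg_left h (show (0:ℝ) ≤ (p:ℝ) by positivity),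
    mul_le_mul_of_nonneg_right hp2 hnn]

lemma lem3 (n : ℕ) (hn : 3 ≤ n) : ((n:ℝ) - 1) ≤ 2 ^ (n - 2) := by
  have h : n - 1 ≤ 2 ^ (n - 2) := by
    have : n - 2 < 2 ^ (n - 2) := Nat.lt_two_pow_self
    omega
  calc ((n:ℝ) - 1) = ((n - 1 : ℕ) : ℝ) := by
        rw [Nat.cast_sub (by omega : 1 ≤ n)]; norm_num
    _ ≤ ((2 ^ (n-2) : ℕ) : ℝ) := by exact_mod_cast h
    _ = 2 ^ (n - 2) := by push_cast; ring

-- key bound A : for s ∈ [0,1/2]:  n*s^(n-1)*(1-2s) + (n-1)*s^n ≤ 1/4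
lemma lemA (n : ℕ) (hn : 3 ≤ n) {s : ℝ} (h0 : 0 ≤ s) (h1 : s ≤ 1/2) :
    (n:ℝ) * s ^ (n-1) * (1 - 2*s) + ((n:ℝ) - 1) * s ^ n ≤ 1/4 := by
  set p := n - 1 with hpdef
  have hp : 2 ≤ p := by omega
  have hnp : n = p + 1 := by omega
  have h2 := lem2 p hp (t := 2*s) (by linarith) (by linarith)
  have hcast : (n:ℝ) = (p:ℝ) + 1 := by rw [hnp]; push_cast; ring
  have hsn : s ^ n = s ^ p * s := by rw [hnp, pow_succ]
  have key : (2:ℝ)^(p+1) * ((n:ℝ) * s ^ (n-1) * (1 - 2*s) + ((n:ℝ) - 1) * s ^ n)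
      = (2*s) ^ p * (2*((p:ℝ)+1) - ((p:ℝ)+2)*(2*s)) := by
    rw [hcast, ← hpdef, hsn, mul_pow, pow_succ]
    ring
  have h4 : (2:ℝ)^(p+1) = 4 * 2^(n-2) := by
    rw [show p+1 = (n-2)+2 by omega, pow_add]; ring
  have h3 := lem3 n hn
  have hpn : (p:ℝ) = (n:ℝ) - 1 := by rw [hcast]; ring
  have hpos : (0:ℝ) < 2^(n-2) := by positivity
  nlinarith [key, h2, hpos]


lemma hAux1 (k : ℕ) : (0:ℝ) ≤ (k:ℝ)*((k:ℝ)-1) := by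
  rcases k with _|k
  · norm_num
  · push_cast; nlinarith [Nat.cast_nonneg (α := ℝ) k]

lemma hAux2 (k : ℕ) : (0:ℝ) ≤ (k:ℝ)*((k:ℝ)-1)*((k:ℝ)-2) := by
  rcases k with _|k
  · norm_num
  · rcases k with _|k
    · norm_num
    · push_cast
      have h0 : (0:ℝ) ≤ (k:ℝ) := Nat.cast_nonneg k
      nlinarith [mul_nonneg (mul_nonneg h0 (by linarith : (0:ℝ) ≤ (k:ℝ)+1))
        (by linarith : (0:ℝ) ≤ (k:ℝ)+2)]

lemma lemBin3 (m : ℕ) {c : ℝ} (hc : 0 ≤ c) :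
    1 + (m:ℝ)*c + (m:ℝ)*((m:ℝ)-1)/2*c^2 + (m:ℝ)*((m:ℝ)-1)*((m:ℝ)-2)/6*c^3 ≤ (1+c)^m := by
  induction m with
  | zero => norm_num
  | succ k ih =>
    have hb := hAux2 k
    have hkey : 1 + ((k:ℝ)+1)*c + ((k:ℝ)+1)*(((k:ℝ)+1)-1)/2*c^2
        + ((k:ℝ)+1)*(((k:ℝ)+1)-1)*(((k:ℝ)+1)-2)/6*c^3
        = (1 + (k:ℝ)*c + (k:ℝ)*((k:ℝ)-1)/2*c^2 + (k:ℝ)*((k:ℝ)-1)*((k:ℝ)-2)/6*c^3)*(1+c)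
          - (k:ℝ)*((k:ℝ)-1)*((k:ℝ)-2)/6*c^4 := by ring
    push_cast
    rw [hkey, pow_succ (1+c) k]
    have h1 : (0:ℝ) ≤ (k:ℝ)*((k:ℝ)-1)*((k:ℝ)-2)/6*c^4 := by positivity
    have h2 := mul_le_mul_of_nonneg_right ih (by linarith : (0:ℝ) ≤ 1+c)
    linarith

-- 16 (m+1) m^m ≤ 3 (m+2)^(m+1)   for m ≥ 2
lemma lemB2 (m : ℕ) (hm : 2 ≤ m) :
    16 * ((m:ℝ)+1) * (m:ℝ)^m ≤ 3 * ((m:ℝ)+2)^(m+1) := by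
  have hm0 : (0:ℝ) < (m:ℝ) := by
    have : 0 < m := by omega
    exact_mod_cast this
  have hmR : (2:ℝ) ≤ (m:ℝ) := by exact_mod_cast hm
  have hc : (0:ℝ) ≤ 2/(m:ℝ) := by positivity
  have hbin := lemBin3 m hc
  set D := 1 + (m:ℝ)*(2/(m:ℝ)) + (m:ℝ)*((m:ℝ)-1)/2*(2/(m:ℝ))^2
      + (m:ℝ)*((m:ℝ)-1)*((m:ℝ)-2)/6*(2/(m:ℝ))^3 with hD
  have hid : ((1:ℝ) + 2/(m:ℝ)) * (m:ℝ) = (m:ℝ)+2 := by field_simp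
  have hpow : ((m:ℝ)+2)^m = (1 + 2/(m:ℝ))^m * (m:ℝ)^m := by rw [← mul_pow, hid]
  have hmm : (0:ℝ) ≤ (m:ℝ)^m := by positivity
  have step1 : D * (m:ℝ)^m ≤ ((m:ℝ)+2)^m := by
    rw [hpow]; exact mul_le_mul_of_nonneg_right hbin hmm
  have hDlow : 16*((m:ℝ)+1) ≤ 3*((m:ℝ)+2)*D := by
    have h3m : (0:ℝ) < 3*(m:ℝ)^2 := by positivity
    have heq : 3*((m:ℝ)+2)*D*(3*(m:ℝ)^2) - 16*((m:ℝ)+1)*(3*(m:ℝ)^2)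
        = 3*((m:ℝ)-2)*(3*(m:ℝ)-2)*((m:ℝ)+4) := by
      rw [hD]; field_simp; ring
    nlinarith [mul_nonneg (mul_nonneg (by linarith : (0:ℝ) ≤ 3*((m:ℝ)-2))
      (by linarith : (0:ℝ) ≤ 3*(m:ℝ)-2)) (by linarith : (0:ℝ) ≤ (m:ℝ)+4)]
  calc 16 * ((m:ℝ)+1) * (m:ℝ)^m ≤ 3*((m:ℝ)+2)*D * (m:ℝ)^m := by
        exact mul_le_mul_of_nonneg_right hDlow hmm
    _ ≤ 3*((m:ℝ)+2) * ((m:ℝ)+2)^m := by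
        rw [mul_assoc]
        refine mul_le_mul_of_nonneg_left step1 (by linarith)
    _ = 3 * ((m:ℝ)+2)^(m+1) := by rw [pow_succ]; ring

-- AM-GM:  n^n u^2 t^(n-2) ≤ 4 (n-2)^(n-2)  for u,t ≥ 0, u+t = 1, n ≥ 3
lemma lemAMGM (n : ℕ) (hn : 3 ≤ n) {u t : ℝ} (hu : 0 ≤ u) (ht : 0 ≤ t) (hut : u + t = 1) :
    (n:ℝ)^n * u^2 * t^(n-2) ≤ 4 * ((n:ℝ)-2)^(n-2) := by
  set m := n - 2 with hmdef
  have hm1 : 1 ≤ m := by omega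
  have hnm : n = m + 2 := by omega
  have hnR : (0:ℝ) < (n:ℝ) := by exact_mod_cast (by omega : 0 < n)
  have hmR : (0:ℝ) < (m:ℝ) := by exact_mod_cast (by omega : 0 < m)
  have hcast : (n:ℝ) = (m:ℝ) + 2 := by rw [hnm]; push_cast; ring
  have ha : (0:ℝ) ≤ (n:ℝ)*u/2 := by positivity
  have hb : (0:ℝ) ≤ (n:ℝ)*t/(m:ℝ) := by positivity
  have hw : 2/(n:ℝ) + (m:ℝ)/(n:ℝ) = 1 := by
    rw [← add_div, hcast]; field_simp; ring
  have hgm := Real.geom_mean_le_arith_mean2_weighted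
    (by positivity : (0:ℝ) ≤ 2/(n:ℝ)) (by positivity : (0:ℝ) ≤ (m:ℝ)/(n:ℝ)) ha hb hw
  have hsum : 2/(n:ℝ) * ((n:ℝ)*u/2) + (m:ℝ)/(n:ℝ) * ((n:ℝ)*t/(m:ℝ)) = 1 := by
    rw [← hut]; field_simp
  have h1 : ((n:ℝ)*u/2) ^ (2/(n:ℝ)) * (((n:ℝ)*t/(m:ℝ)) ^ ((m:ℝ)/(n:ℝ))) ≤ 1 := by
    rw [← hsum]; exact hgm
  have hpow : (((n:ℝ)*u/2) ^ (2/(n:ℝ)) * (((n:ℝ)*t/(m:ℝ)) ^ ((m:ℝ)/(n:ℝ))))^(n:ℕ)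
      = ((n:ℝ)*u/2)^(2:ℕ) * ((n:ℝ)*t/(m:ℝ))^(m:ℕ) := by
    rw [mul_pow, ← Real.rpow_natCast (((n:ℝ)*u/2) ^ (2/(n:ℝ))) n,
      ← Real.rpow_natCast ((((n:ℝ)*t/(m:ℝ))) ^ ((m:ℝ)/(n:ℝ))) n,
      ← Real.rpow_mul ha, ← Real.rpow_mul hb,
      show 2/(n:ℝ)*((n:ℕ):ℝ) = ((2:ℕ):ℝ) by push_cast; field_simp,
      show (m:ℝ)/(n:ℝ)*((n:ℕ):ℝ) = ((m:ℕ):ℝ) by push_cast; field_simp,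
      Real.rpow_natCast, Real.rpow_natCast]
  have h4 : ((n:ℝ)*u/2)^(2:ℕ) * ((n:ℝ)*t/(m:ℝ))^(m:ℕ) ≤ 1 := by
    rw [← hpow]
    exact pow_le_one₀ (mul_nonneg (Real.rpow_nonneg ha _) (Real.rpow_nonneg hb _)) h1
  have hexp : ((n:ℝ)*u/2)^(2:ℕ) * ((n:ℝ)*t/(m:ℝ))^(m:ℕ) * (4 * (m:ℝ)^m)
      = (n:ℝ)^n * u^2 * t^(n-2) := by
    have hmm0 : ((m:ℝ))^m ≠ 0 := by positivity
    rw [← hmdef, show (n:ℝ)^n = (n:ℝ)^(m+2) by rw [hnm], pow_add, div_pow, div_pow,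
      mul_pow, mul_pow]
    field_simp
    ring
  have hm2 : (n:ℝ) - 2 = (m:ℝ) := by rw [hcast]; ring
  rw [hm2, ← hexp]
  have h5 : (0:ℝ) ≤ 4 * (m:ℝ)^m := by positivity
  calc ((n:ℝ)*u/2)^(2:ℕ) * ((n:ℝ)*t/(m:ℝ))^(m:ℕ) * (4 * (m:ℝ)^m) ≤ 1 * (4 * (m:ℝ)^m) :=
        mul_le_mul_of_nonneg_right h4 h5
    _ = 4 * (m:ℝ)^m := by ring

lemma lemB (n : ℕ) (hn : 3 ≤ n) {t : ℝ} (h1 : 1/2 ≤ t) (h2 : t ≤ 1) :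
    (n:ℝ)*((n:ℝ)-1)*t^(n-2)*(1-t)^2 ≤ 3/4 := by
  rcases (by omega : n = 3 ∨ n = 4 ∨ 5 ≤ n) with h|h|h
  · subst h
    norm_num
    nlinarith [mul_nonneg (mul_nonneg (by linarith : (0:ℝ) ≤ t - 1/2) (by linarith : (0:ℝ) ≤ 1 - t)) (by linarith : (0:ℝ) ≤ 1 - t),
      mul_nonneg (mul_nonneg (by linarith : (0:ℝ) ≤ t - 1/2) (by linarith : (0:ℝ) ≤ t - 1/2)) (by linarith : (0:ℝ) ≤ 1 - t),
      mul_nonneg (by linarith : (0:ℝ) ≤ t - 1/2) (by linarith : (0:ℝ) ≤ 1 - t)]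
  · subst h
    norm_num
    have hx : t*(1-t) ≤ 1/4 := by nlinarith [sq_nonneg (2*t-1)]
    have hx0 : (0:ℝ) ≤ t*(1-t) := mul_nonneg (by linarith) (by linarith)
    nlinarith [mul_le_mul hx hx hx0 (by norm_num : (0:ℝ) ≤ 1/4)]
  · have hAM := lemAMGM n hn (u := 1-t) (t := t) (by linarith) (by linarith) (by ring)
    have hB2 := lemB2 (n-2) (by omega)
    have hc1 : ((n-2:ℕ):ℝ) = (n:ℝ) - 2 := by
      rw [Nat.cast_sub (by omega : 2 ≤ n)]; norm_num
    have hc2 : ((n:ℝ)-2) + 1 = (n:ℝ) - 1 := by ring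
    have hc3 : ((n:ℝ)-2) + 2 = (n:ℝ) := by ring
    rw [hc1, hc2, hc3] at hB2
    -- hB2 : 16 * ((n:ℝ)-1) * ((n:ℝ)-2)^(n-2) ≤ 3 * (n:ℝ)^(n-2+1)
    have hexp : (n - 2) + 1 = n - 1 := by omega
    rw [hexp] at hB2
    have hn1 : (0:ℝ) ≤ (n:ℝ) - 1 := by
      have : (3:ℝ) ≤ (n:ℝ) := by exact_mod_cast hn
      linarith
    have hmul := mul_le_mul_of_nonneg_left hAM hn1
    have hnn : (n:ℝ)^n = (n:ℝ)^(n-1) * (n:ℝ) := by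
      rw [← pow_succ]; congr 1; omega
    have hpos : (0:ℝ) < (n:ℝ)^(n-1) := by
      have : (0:ℝ) < (n:ℝ) := by exact_mod_cast (by omega : 0 < n)
      positivity
    have key : (n:ℝ)^(n-1) * ((n:ℝ)*((n:ℝ)-1)*t^(n-2)*(1-t)^2)
        ≤ (n:ℝ)^(n-1) * (3/4) := by
      calc (n:ℝ)^(n-1) * ((n:ℝ)*((n:ℝ)-1)*t^(n-2)*(1-t)^2)
          = ((n:ℝ)-1) * ((n:ℝ)^n * (1-t)^2 * t^(n-2)) := by rw [hnn]; ring
        _ ≤ ((n:ℝ)-1) * (4 * ((n:ℝ)-2)^(n-2)) := hmul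
        _ = (1/4) * (16 * ((n:ℝ)-1) * ((n:ℝ)-2)^(n-2)) := by ring
        _ ≤ (1/4) * (3 * (n:ℝ)^(n-1)) := by linarith
        _ = (n:ℝ)^(n-1) * (3/4) := by ring
    exact le_of_mul_le_mul_left key hpos


-- derivative of (max t 0)^m for m ≥ 2
lemma hasDerivAt_maxpow (m : ℕ) (hm : 2 ≤ m) (t : ℝ) :
    HasDerivAt (fun s : ℝ => (max s 0)^m) ((m:ℝ) * (max t 0)^(m-1)) t := by
  rcases lt_trichotomy t 0 with ht|ht|ht
  · have : (fun s : ℝ => (max s 0)^m) =ᶠ[nhds t] (fun _ => (0:ℝ)) := by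
      filter_upwards [eventually_lt_nhds ht] with s hs
      rw [max_eq_right hs.le, zero_pow (by omega : m ≠ 0)]
    have h0 : HasDerivAt (fun _ : ℝ => (0:ℝ)) 0 t := hasDerivAt_const t 0
    have := h0.congr_of_eventuallyEq this
    refine this.congr_deriv ?_
    rw [max_eq_right ht.le, zero_pow (by omega : m - 1 ≠ 0), mul_zero]
  · subst ht
    rw [max_self, zero_pow (by omega : m - 1 ≠ 0), mul_zero]
    rw [hasDerivAt_iff_tendsto_slope]
    apply squeeze_zero_norm' (a := fun s => |s|)
    · filter_upwards [eventually_mem_nhdsWithin,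
        inter_mem_nhdsWithin _ (Metric.ball_mem_nhds (0:ℝ) one_pos)] with s hs hs'
      have hs0 : s ≠ 0 := hs
      have hsb : |s| < 1 := by simpa [Real.dist_eq] using hs'.2
      have h1 : |max s 0| ≤ |s| := by
        rcases le_or_gt s 0 with h|h
        · rw [max_eq_right h]; simp
        · rw [max_eq_left h.le]
      have h2 : |max s 0|^m ≤ |s|^m := pow_le_pow_left₀ (abs_nonneg _) h1 m
      have h3 : |s|^m ≤ |s|^2 := pow_le_pow_of_le_one (abs_nonneg _) hsb.le hm
      have hslope : slope (fun s : ℝ => (max s 0)^m) 0 s = (max s 0)^m / s := by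
        simp only [slope, zero_pow (by omega : m ≠ 0), max_self, sub_zero, vsub_eq_sub]
        rw [div_eq_inv_mul, smul_eq_mul]
      rw [hslope, norm_div]
      rw [div_le_iff₀ (by simpa [abs_pos] using hs0 : (0:ℝ) < ‖s‖)]
      calc ‖(max s 0)^m‖ = |max s 0|^m := by rw [Real.norm_eq_abs, abs_pow]
        _ ≤ |s|^2 := le_trans h2 h3
        _ = |s| * ‖s‖ := by rw [Real.norm_eq_abs]; ring
    · have : Filter.Tendsto (fun s : ℝ => |s|) (nhds 0) (nhds 0) := by
        simpa using continuous_abs.tendsto (0:ℝ)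
      exact this.mono_left nhdsWithin_le_nhds
  · have h0 : HasDerivAt (fun s : ℝ => s^m) ((m:ℝ) * t^(m-1)) t := hasDerivAt_pow m t
    have : (fun s : ℝ => (max s 0)^m) =ᶠ[nhds t] (fun s => s^m) := by
      filter_upwards [eventually_gt_nhds ht] with s hs
      rw [max_eq_left hs.le]
    have h2 := h0.congr_of_eventuallyEq this
    refine h2.congr_deriv ?_
    rw [max_eq_left ht.le]

lemma abs_int_le {f g : ℝ → ℝ} {a b : ℝ} (hab : a ≤ b)
    (hf : IntervalIntegrable f volume a b)
    (hg : IntervalIntegrable g volume a b)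
    (h : ∀ y ∈ Icc a b, |f y| ≤ g y) :
    |∫ y in a..b, f y| ≤ ∫ y in a..b, g y :=
  calc |∫ y in a..b, f y| ≤ ∫ y in a..b, |f y| :=
        intervalIntegral.abs_integral_le_integral_abs hab
    _ ≤ ∫ y in a..b, g y := intervalIntegral.integral_mono_on hab hf.abs hg h

lemma II_bdd {f : ℝ → ℝ} {a b C : ℝ} (hab : a ≤ b)
    (hm : AEStronglyMeasurable f (volume.restrict (Ioc a b)))
    (hC : ∀ z ∈ Ioc a b, |f z| ≤ C) : IntervalIntegrable f volume a b := by
  rw [intervalIntegrable_iff_integrableOn_Ioc_of_le hab]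
  refine ⟨hm, ?_⟩
  haveI : IsFiniteMeasure (volume.restrict (Ioc a b)) :=
    ⟨by rw [Measure.restrict_apply_univ]; exact measure_Ioc_lt_top⟩
  apply MeasureTheory.HasFiniteIntegral.of_bounded (C := C)
  rw [MeasureTheory.ae_restrict_iff' measurableSet_Ioc]
  exact MeasureTheory.ae_of_all _ fun z hz => by simpa [Real.norm_eq_abs] using hC z hz

lemma meas_inner {G : ℝ → ℝ → ℝ} (hG : Measurable (Function.uncurry G))
    {L : ℝ → ℝ} (hL : Measurable L) (hL0 : ∀ y, 0 ≤ L y) :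
    Measurable fun y => ∫ z in (0:ℝ)..(L y), G y z := by
  have heq : ∀ y, ∫ z in (0:ℝ)..(L y), G y z
      = ∫ z, (Ioc (0:ℝ) (L y)).indicator (G y) z := by
    intro y
    rw [intervalIntegral.integral_of_le (hL0 y),
      ← MeasureTheory.integral_indicator measurableSet_Ioc]
  simp_rw [heq]
  have hS : MeasurableSet {p : ℝ × ℝ | 0 < p.2 ∧ p.2 ≤ L p.1} :=
    (measurableSet_lt measurable_const measurable_snd).inter
      (measurableSet_le measurable_snd (hL.comp measurable_fst))
  have hrw : (fun p : ℝ × ℝ => (Ioc (0:ℝ) (L p.1)).indicator (G p.1) p.2)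
      = {p : ℝ × ℝ | 0 < p.2 ∧ p.2 ≤ L p.1}.indicator (Function.uncurry G) := by
    funext p
    by_cases h : 0 < p.2 ∧ p.2 ≤ L p.1
    · rw [Set.indicator_of_mem (by exact h : p.2 ∈ Ioc 0 (L p.1)),
        Set.indicator_of_mem (by exact h)]
      rfl
    · rw [Set.indicator_of_notMem (by exact h : p.2 ∉ Ioc 0 (L p.1)),
        Set.indicator_of_notMem (by exact h)]
  have hmeas : StronglyMeasurable fun p : ℝ × ℝ =>
      (Ioc (0:ℝ) (L p.1)).indicator (G p.1) p.2 := by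
    rw [hrw]
    exact (hG.indicator hS).stronglyMeasurable
  exact (hmeas.integral_prod_right').measurable


lemma term_bound
    {F₁ F₂ : ℝ → ℝ} (hm₁ : Measurable F₁) (hm₂ : Measurable F₂)
    {C₁ C₂ : ℝ} (hb₁ : ∀ z ∈ Icc (0:ℝ) 1, |F₁ z| ≤ C₁) (hb₂ : ∀ z ∈ Icc (0:ℝ) 1, |F₂ z| ≤ C₂)
    {M : ℝ} (hM0 : 0 ≤ M) (hM : ∀ z ∈ Icc (0:ℝ) 1, |F₁ z - F₂ z| ≤ M)
    {K : ℝ → ℝ → ℝ} (hK : Measurable (Function.uncurry K)) {DK : ℝ}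
    {a b : ℝ} (hab : a ≤ b)
    (hK0 : ∀ y ∈ Icc a b, ∀ z ∈ Icc (0:ℝ) 1, 0 ≤ K y z)
    (hKb : ∀ y ∈ Icc a b, ∀ z ∈ Icc (0:ℝ) 1, K y z ≤ DK)
    {L : ℝ → ℝ} (hL : Measurable L) (hL0 : ∀ y, 0 ≤ L y) (hL1 : ∀ y ∈ Icc a b, L y ≤ 1)
    {c : ℝ → ℝ} (hcI : IntervalIntegrable c volume a b)
    (hc : ∀ y ∈ Icc a b, (∫ z in (0:ℝ)..(L y), K y z) ≤ c y)
    {B : ℝ} (hcB : (∫ y in a..b, c y) ≤ B) :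
    |(∫ y in a..b, ∫ z in (0:ℝ)..(L y), K y z * F₁ z)
      - (∫ y in a..b, ∫ z in (0:ℝ)..(L y), K y z * F₂ z)| ≤ M * B := by
  have hz0 : (0:ℝ) ∈ Icc (0:ℝ) 1 := ⟨le_refl 0, zero_le_one⟩
  have hya : a ∈ Icc a b := ⟨le_refl a, hab⟩
  have hC₁0 : 0 ≤ C₁ := le_trans (abs_nonneg _) (hb₁ 0 hz0)
  have hC₂0 : 0 ≤ C₂ := le_trans (abs_nonneg _) (hb₂ 0 hz0)
  have hDK0 : 0 ≤ DK := le_trans (hK0 a hya 0 hz0) (hKb a hya 0 hz0)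
  have hKy : ∀ y, Measurable (fun z => K y z) := fun y =>
    hK.comp (measurable_const.prodMk measurable_id)
  -- membership: z ∈ Ioc 0 (L y) → z ∈ Icc 0 1 (given y ∈ Icc a b)
  have hzmem : ∀ y ∈ Icc a b, ∀ z ∈ Ioc (0:ℝ) (L y), z ∈ Icc (0:ℝ) 1 :=
    fun y hy z hz => ⟨hz.1.le, le_trans hz.2 (hL1 y hy)⟩
  have hzmem' : ∀ y ∈ Icc a b, ∀ z ∈ Icc (0:ℝ) (L y), z ∈ Icc (0:ℝ) 1 :=
    fun y hy z hz => ⟨hz.1, le_trans hz.2 (hL1 y hy)⟩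
  -- inner interval integrability
  have hIz : ∀ (F : ℝ → ℝ), Measurable F → ∀ (C : ℝ), (∀ z ∈ Icc (0:ℝ) 1, |F z| ≤ C) →
      ∀ y ∈ Icc a b, IntervalIntegrable (fun z => K y z * F z) volume 0 (L y) := by
    intro F hmF C hbF y hy
    refine II_bdd (hL0 y) (((hKy y).mul hmF).aestronglyMeasurable) (C := DK * C) ?_
    intro z hz
    have hz1 := hzmem y hy z hz
    rw [abs_mul, abs_of_nonneg (hK0 y hy z hz1)]
    exact mul_le_mul (hKb y hy z hz1) (hbF z hz1) (abs_nonneg _) hDK0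
  have hIzK : ∀ y ∈ Icc a b, IntervalIntegrable (fun z => K y z * M) volume 0 (L y) := by
    intro y hy
    refine II_bdd (hL0 y) (((hKy y).mul measurable_const).aestronglyMeasurable) (C := DK * M) ?_
    intro z hz
    have hz1 := hzmem y hy z hz
    rw [abs_mul, abs_of_nonneg (hK0 y hy z hz1), abs_of_nonneg hM0]
    exact mul_le_mul_of_nonneg_right (hKb y hy z hz1) hM0
  -- pointwise bound on the difference of inner integrals
  have hpt : ∀ y ∈ Icc a b,
      |(∫ z in (0:ℝ)..(L y), K y z * F₁ z) - ∫ z in (0:ℝ)..(L y), K y z * F₂ z|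
        ≤ c y * M := by
    intro y hy
    rw [← intervalIntegral.integral_sub (hIz F₁ hm₁ C₁ hb₁ y hy) (hIz F₂ hm₂ C₂ hb₂ y hy)]
    calc |∫ z in (0:ℝ)..(L y), (K y z * F₁ z - K y z * F₂ z)|
        ≤ ∫ z in (0:ℝ)..(L y), K y z * M := by
          apply abs_int_le (hL0 y)
            ((hIz F₁ hm₁ C₁ hb₁ y hy).sub (hIz F₂ hm₂ C₂ hb₂ y hy)) (hIzK y hy)
          intro z hz
          have hz1 := hzmem' y hy z hz
          have : K y z * F₁ z - K y z * F₂ z = K y z * (F₁ z - F₂ z) := by ring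
          rw [this, abs_mul, abs_of_nonneg (hK0 y hy z hz1)]
          exact mul_le_mul_of_nonneg_left (hM z hz1) (hK0 y hy z hz1)
      _ = (∫ z in (0:ℝ)..(L y), K y z) * M := intervalIntegral.integral_mul_const M _
      _ ≤ c y * M := mul_le_mul_of_nonneg_right (hc y hy) hM0
  -- outer integrability of the two iterated integrals
  have hOut : ∀ (F : ℝ → ℝ), Measurable F → ∀ (C : ℝ), (0 ≤ C) → (∀ z ∈ Icc (0:ℝ) 1, |F z| ≤ C) →
      IntervalIntegrable (fun y => ∫ z in (0:ℝ)..(L y), K y z * F z) volume a b := by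
    intro F hmF C hC0 hbF
    have hmeas : Measurable fun y => ∫ z in (0:ℝ)..(L y), K y z * F z :=
      meas_inner (G := fun y z => K y z * F z)
        (by exact hK.mul (hmF.comp measurable_snd)) hL hL0
    refine II_bdd hab hmeas.aestronglyMeasurable (C := DK * C) ?_
    intro y hy
    have hy' : y ∈ Icc a b := Ioc_subset_Icc_self hy
    calc |∫ z in (0:ℝ)..(L y), K y z * F z| ≤ ∫ z in (0:ℝ)..(L y), DK * C := by
          apply abs_int_le (hL0 y) (hIz F hmF C hbF y hy') intervalIntegrable_const
          intro z hz
          have hz1 := hzmem' y hy' z hz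
          rw [abs_mul, abs_of_nonneg (hK0 y hy' z hz1)]
          exact mul_le_mul (hKb y hy' z hz1) (hbF z hz1) (abs_nonneg _) hDK0
      _ = L y * (DK * C) := by rw [intervalIntegral.integral_const, smul_eq_mul, sub_zero]
      _ ≤ DK * C := by
          nlinarith [hL0 y, hL1 y hy', mul_nonneg hDK0 hC0]
  -- assemble
  rw [← intervalIntegral.integral_sub (hOut F₁ hm₁ C₁ hC₁0 hb₁) (hOut F₂ hm₂ C₂ hC₂0 hb₂)]
  calc |∫ y in a..b, ((∫ z in (0:ℝ)..(L y), K y z * F₁ z)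
          - ∫ z in (0:ℝ)..(L y), K y z * F₂ z)|
      ≤ ∫ y in a..b, c y * M := by
        apply abs_int_le hab
          ((hOut F₁ hm₁ C₁ hC₁0 hb₁).sub (hOut F₂ hm₂ C₂ hC₂0 hb₂)) (hcI.mul_const M)
        exact hpt
    _ = (∫ y in a..b, c y) * M := intervalIntegral.integral_mul_const M c
    _ ≤ B * M := mul_le_mul_of_nonneg_right hcB hM0
    _ = M * B := mul_comm B M


-- inner integral bound for the second kernel
lemma inner2 (n : ℕ) (hn : 3 ≤ n) (w : ℝ) {Lz : ℝ} (hLz : 0 ≤ Lz) :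
    (∫ z in (0:ℝ)..Lz, 2*(n:ℝ)*((n:ℝ)-1)*(max (w - 2*z) 0)^(n-2))
      ≤ (n:ℝ)*(max w 0)^(n-1) := by
  have hder : ∀ z ∈ uIcc (0:ℝ) Lz,
      HasDerivAt (fun z => -(n:ℝ)*(max (w - 2*z) 0)^(n-1))
        (2*(n:ℝ)*((n:ℝ)-1)*(max (w - 2*z) 0)^(n-2)) z := by
    intro z _
    have haff : HasDerivAt (fun z : ℝ => w - 2*z) (-2) z := by
      simpa using ((hasDerivAt_id z).const_mul (2:ℝ)).const_sub w
    have h1 := (hasDerivAt_maxpow (n-1) (by omega) (w - 2*z)).comp z haff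
    have h2 := h1.const_mul (-(n:ℝ))
    refine h2.congr_deriv ?_
    have e1 : n-1-1 = n-2 := by omega
    rw [e1]
    push_cast [Nat.cast_sub (by omega : 1 ≤ n)]
    ring
  have hint : IntervalIntegrable
      (fun z => 2*(n:ℝ)*((n:ℝ)-1)*(max (w - 2*z) 0)^(n-2)) volume 0 Lz := by
    apply Continuous.intervalIntegrable
    exact continuous_const.mul (((continuous_const.sub (continuous_const.mul continuous_id)).max continuous_const).pow _)
  rw [intervalIntegral.integral_eq_sub_of_hasDerivAt hder hint]
  have h0 : (0:ℝ) ≤ (max (w - 2*Lz) 0)^(n-1) := by positivity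
  have hn0 : (0:ℝ) ≤ (n:ℝ) := Nat.cast_nonneg n
  have : (max (w - 2*0) 0) = max w 0 := by norm_num
  rw [this]
  nlinarith [mul_nonneg hn0 h0]

-- outer bound for term 1, case x ≤ 1/2
lemma outer1a (n : ℕ) (hn : 3 ≤ n) {x : ℝ} (hx0 : 0 ≤ x) (hx : x ≤ 1/2) :
    (∫ y in (max (2*x-1) 0)..x, 2*(n:ℝ)*((n:ℝ)-1)*y^(n-2)*((1+y)/2 - x)) ≤ 1/4 := by
  rw [max_eq_right (by linarith : 2*x-1 ≤ 0)]
  have hder : ∀ y ∈ uIcc (0:ℝ) x,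
      HasDerivAt (fun y => (n:ℝ)*(1-2*x)*y^(n-1) + ((n:ℝ)-1)*y^n)
        (2*(n:ℝ)*((n:ℝ)-1)*y^(n-2)*((1+y)/2 - x)) y := by
    intro y _
    have h1 := (hasDerivAt_pow (n-1) y).const_mul ((n:ℝ)*(1-2*x))
    have h2 := (hasDerivAt_pow n y).const_mul ((n:ℝ)-1)
    have h := h1.add h2
    refine h.congr_deriv ?_
    have e1 : n-1-1 = n-2 := by omega
    have e2 : y^(n-1) = y^(n-2)*y := by rw [← pow_succ]; congr 1; omega
    rw [e1, e2]
    push_cast [Nat.cast_sub (by omega : 1 ≤ n)]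
    ring
  have hint : IntervalIntegrable
      (fun y => 2*(n:ℝ)*((n:ℝ)-1)*y^(n-2)*((1+y)/2 - x)) volume 0 x := by
    apply Continuous.intervalIntegrable
    exact (continuous_const.mul (continuous_pow _)).mul
      (((continuous_const.add continuous_id).div_const 2).sub continuous_const)
  rw [intervalIntegral.integral_eq_sub_of_hasDerivAt hder hint]
  have hA := lemA n hn hx0 hx
  have hz1 : (0:ℝ)^(n-1) = 0 := zero_pow (by omega)
  have hz2 : (0:ℝ)^n = 0 := zero_pow (by omega)
  rw [hz1, hz2]
  nlinarith [hA]

-- outer bound for term 1, case x ≥ 1/2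
lemma outer1b (n : ℕ) (hn : 3 ≤ n) {x : ℝ} (hx : 1/2 ≤ x) (hx1 : x ≤ 1) :
    (∫ y in (max (2*x-1) 0)..x, 2*(n:ℝ)*((n:ℝ)-1)*y^(n-2)*((1+y)/2 - x)) ≤ 3/8 := by
  rw [max_eq_left (by linarith : (0:ℝ) ≤ 2*x-1)]
  have hab : 2*x-1 ≤ x := by linarith
  have hcont1 : Continuous (fun y : ℝ => 2*(n:ℝ)*((n:ℝ)-1)*y^(n-2)*((1+y)/2 - x)) :=
    (continuous_const.mul (continuous_pow _)).mul
      (((continuous_const.add continuous_id).div_const 2).sub continuous_const)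
  have hcont2 : Continuous (fun y : ℝ => 2*(n:ℝ)*((n:ℝ)-1)*x^(n-2)*((1+y)/2 - x)) :=
    continuous_const.mul
      (((continuous_const.add continuous_id).div_const 2).sub continuous_const)
  have hmono : (∫ y in (2*x-1)..x, 2*(n:ℝ)*((n:ℝ)-1)*y^(n-2)*((1+y)/2 - x))
      ≤ ∫ y in (2*x-1)..x, 2*(n:ℝ)*((n:ℝ)-1)*x^(n-2)*((1+y)/2 - x) := by
    apply intervalIntegral.integral_mono_on hab
      (hcont1.intervalIntegrable _ _) (hcont2.intervalIntegrable _ _)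
    intro y hy
    have hy0 : 0 ≤ y := le_trans (by linarith) hy.1
    have hyp : y^(n-2) ≤ x^(n-2) := pow_le_pow_left₀ hy0 hy.2 _
    have hfac : (0:ℝ) ≤ 2*(n:ℝ)*((n:ℝ)-1)*((1+y)/2 - x) := by
      have h1 : (0:ℝ) ≤ (1+y)/2 - x := by
        have := hy.1; linarith
      have h2 : (1:ℝ) ≤ (n:ℝ) := by exact_mod_cast Nat.one_le_of_lt hn
      have h3 : (0:ℝ) ≤ (n:ℝ) := by linarith
      exact mul_nonneg (mul_nonneg (mul_nonneg (by norm_num) h3) (by linarith)) h1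
    calc 2*(n:ℝ)*((n:ℝ)-1)*y^(n-2)*((1+y)/2 - x)
        = (2*(n:ℝ)*((n:ℝ)-1)*((1+y)/2 - x)) * y^(n-2) := by ring
      _ ≤ (2*(n:ℝ)*((n:ℝ)-1)*((1+y)/2 - x)) * x^(n-2) :=
          mul_le_mul_of_nonneg_left hyp hfac
      _ = 2*(n:ℝ)*((n:ℝ)-1)*x^(n-2)*((1+y)/2 - x) := by ring
  have hder : ∀ y ∈ uIcc (2*x-1) x,
      HasDerivAt (fun y => (n:ℝ)*((n:ℝ)-1)*x^(n-2)*(y^2/2 - (2*x-1)*y))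
        (2*(n:ℝ)*((n:ℝ)-1)*x^(n-2)*((1+y)/2 - x)) y := by
    intro y _
    have h1 : HasDerivAt (fun y : ℝ => y^2/2 - (2*x-1)*y) (y - (2*x-1)) y := by
      have h := ((hasDerivAt_pow 2 y).div_const 2).sub ((hasDerivAt_id y).const_mul (2*x-1))
      simp at h
      exact h
    have h2 := h1.const_mul ((n:ℝ)*((n:ℝ)-1)*x^(n-2))
    refine h2.congr_deriv ?_
    ring
  have heval : (∫ y in (2*x-1)..x, 2*(n:ℝ)*((n:ℝ)-1)*x^(n-2)*((1+y)/2 - x))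
      = (n:ℝ)*((n:ℝ)-1)*x^(n-2)*(1-x)^2/2 := by
    rw [intervalIntegral.integral_eq_sub_of_hasDerivAt hder (hcont2.intervalIntegrable _ _)]
    ring
  have hB := lemB n hn hx hx1
  linarith [hmono, heval.le, heval.ge]

-- outer bound for term 2
lemma outer2 (n : ℕ) (hn : 3 ≤ n) {x : ℝ} (hx0 : 0 ≤ x) (hx1 : x ≤ 1) :
    (∫ y in (max (max (x - 1/4) 0) (2*x - 1))..x, (n:ℝ)*(max (3*y-2*x) 0)^(n-1)) ≤ 1/3 := by
  set a := max (max (x - 1/4) 0) (2*x - 1) with ha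
  have hab : a ≤ x := by
    apply max_le (max_le (by linarith) hx0) (by linarith)
  have hder : ∀ y ∈ uIcc a x,
      HasDerivAt (fun y => (max (3*y-2*x) 0)^n / 3)
        ((n:ℝ)*(max (3*y-2*x) 0)^(n-1)) y := by
    intro y _
    have haff : HasDerivAt (fun y : ℝ => 3*y-2*x) 3 y := by
      simpa using ((hasDerivAt_id y).const_mul (3:ℝ)).sub_const (2*x)
    have h1 := (hasDerivAt_maxpow n (by omega) (3*y-2*x)).comp y haff
    have h2 := h1.div_const 3
    refine h2.congr_deriv ?_
    ring
  have hcont : Continuous (fun y : ℝ => (n:ℝ)*(max (3*y-2*x) 0)^(n-1)) :=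
    continuous_const.mul
      ((((continuous_const.mul continuous_id).sub continuous_const).max continuous_const).pow _)
  rw [intervalIntegral.integral_eq_sub_of_hasDerivAt hder (hcont.intervalIntegrable _ _)]
  have h1 : max (3*x-2*x) 0 = x := by rw [max_eq_left (by linarith)]; ring_nf
  rw [h1]
  have h2 : (0:ℝ) ≤ (max (3*a-2*x) 0)^n / 3 := by positivity
  have h3 : x^n ≤ 1 := pow_le_one₀ hx0 hx1
  linarith

-- outer bound for term 3 (x ≥ 1/2); c₃ y = 4n(n-1)(2y-1)^(n-2)*((1+y)/2-x)
lemma outer3 (n : ℕ) (hn : 3 ≤ n) {x : ℝ} (hx : 1/2 ≤ x) (hx1 : x ≤ 1) :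
    (∫ y in (max (1/2:ℝ) (2*x-1))..x, 4*(n:ℝ)*((n:ℝ)-1)*(2*y-1)^(n-2)*((1+y)/2 - x))
      ≤ 3/16 := by
  have hcont : Continuous (fun y : ℝ => 4*(n:ℝ)*((n:ℝ)-1)*(2*y-1)^(n-2)*((1+y)/2 - x)) :=
    (continuous_const.mul (((continuous_const.mul continuous_id).sub continuous_const).pow _)).mul
      (((continuous_const.add continuous_id).div_const 2).sub continuous_const)
  rcases le_total x (3/4) with hx34|hx34
  · -- lower limit is 1/2, exact antiderivative
    rw [max_eq_left (by linarith : 2*x-1 ≤ (1/2:ℝ))]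
    have hder : ∀ y ∈ uIcc (1/2:ℝ) x,
        HasDerivAt (fun y => ((n:ℝ)-1)/2*(2*y-1)^n - (n:ℝ)/2*(2*(2*x-1)-1)*(2*y-1)^(n-1))
          (4*(n:ℝ)*((n:ℝ)-1)*(2*y-1)^(n-2)*((1+y)/2 - x)) y := by
      intro y _
      have haff : HasDerivAt (fun y : ℝ => 2*y-1) 2 y := by
        simpa using ((hasDerivAt_id y).const_mul (2:ℝ)).sub_const 1
      have h1 := ((hasDerivAt_pow n (2*y-1)).comp y haff).const_mul (((n:ℝ)-1)/2)
      have h2 := ((hasDerivAt_pow (n-1) (2*y-1)).comp y haff).const_mul ((n:ℝ)/2*(2*(2*x-1)-1))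
      have h := h1.sub h2
      refine h.congr_deriv ?_
      have e1 : n-1-1 = n-2 := by omega
      have e2 : (2*y-1)^(n-1) = (2*y-1)^(n-2)*(2*y-1) := by rw [← pow_succ]; congr 1; omega
      rw [e1, e2]
      push_cast [Nat.cast_sub (by omega : 1 ≤ n)]
      ring
    rw [intervalIntegral.integral_eq_sub_of_hasDerivAt hder (hcont.intervalIntegrable _ _)]
    have hz : (2*(1/2:ℝ)-1) = 0 := by norm_num
    rw [hz, zero_pow (by omega : n ≠ 0), zero_pow (by omega : n-1 ≠ 0)]
    have hA := lemA n hn (s := 2*x-1) (by linarith) (by linarith)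
    nlinarith [hA]
  · -- lower limit is 2x-1, comparison + exact
    rw [max_eq_right (by linarith : (1/2:ℝ) ≤ 2*x-1)]
    set s := 2*x-1 with hs
    have hab : s ≤ x := by rw [hs]; linarith
    have hcont2 : Continuous (fun y : ℝ => 4*(n:ℝ)*((n:ℝ)-1)*s^(n-2)*((1+y)/2 - x)) :=
      continuous_const.mul
        (((continuous_const.add continuous_id).div_const 2).sub continuous_const)
    have hmono : (∫ y in s..x, 4*(n:ℝ)*((n:ℝ)-1)*(2*y-1)^(n-2)*((1+y)/2 - x))
        ≤ ∫ y in s..x, 4*(n:ℝ)*((n:ℝ)-1)*s^(n-2)*((1+y)/2 - x) := by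
      apply intervalIntegral.integral_mono_on hab
        (hcont.intervalIntegrable _ _) (hcont2.intervalIntegrable _ _)
      intro y hy
      have hy1 : s ≤ y := hy.1
      have hy2 : y ≤ x := hy.2
      have h20 : (0:ℝ) ≤ 2*y-1 := by rw [hs] at hy1; linarith
      have h2s : 2*y-1 ≤ s := by rw [hs]; rw [hs] at hy1; linarith
      have hyp : (2*y-1)^(n-2) ≤ s^(n-2) := pow_le_pow_left₀ h20 h2s _
      have h1 : (0:ℝ) ≤ (1+y)/2 - x := by rw [hs] at hy1; linarith
      have h3 : (0:ℝ) ≤ (n:ℝ) := Nat.cast_nonneg n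
      have h4 : (1:ℝ) ≤ (n:ℝ) := by exact_mod_cast Nat.one_le_of_lt hn
      have hfac : (0:ℝ) ≤ 4*(n:ℝ)*((n:ℝ)-1)*((1+y)/2 - x) :=
        mul_nonneg (mul_nonneg (mul_nonneg (by norm_num) h3) (by linarith)) h1
      calc 4*(n:ℝ)*((n:ℝ)-1)*(2*y-1)^(n-2)*((1+y)/2 - x)
          = (4*(n:ℝ)*((n:ℝ)-1)*((1+y)/2 - x)) * (2*y-1)^(n-2) := by ring
        _ ≤ (4*(n:ℝ)*((n:ℝ)-1)*((1+y)/2 - x)) * s^(n-2) :=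
            mul_le_mul_of_nonneg_left hyp hfac
        _ = 4*(n:ℝ)*((n:ℝ)-1)*s^(n-2)*((1+y)/2 - x) := by ring
    have hder : ∀ y ∈ uIcc s x,
        HasDerivAt (fun y => 2*(n:ℝ)*((n:ℝ)-1)*s^(n-2)*(y^2/2 - s*y))
          (4*(n:ℝ)*((n:ℝ)-1)*s^(n-2)*((1+y)/2 - x)) y := by
      intro y _
      have h1 : HasDerivAt (fun y : ℝ => y^2/2 - s*y) (y - s) y := by
        have h := ((hasDerivAt_pow 2 y).div_const 2).sub ((hasDerivAt_id y).const_mul s)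
        simp at h
        exact h
      have h2 := h1.const_mul (2*(n:ℝ)*((n:ℝ)-1)*s^(n-2))
      refine h2.congr_deriv ?_
      rw [hs]
      ring
    have heval : (∫ y in s..x, 4*(n:ℝ)*((n:ℝ)-1)*s^(n-2)*((1+y)/2 - x))
        = (n:ℝ)*((n:ℝ)-1)*s^(n-2)*(1-s)^2/4 := by
      rw [intervalIntegral.integral_eq_sub_of_hasDerivAt hder (hcont2.intervalIntegrable _ _)]
      rw [hs]
      ring
    have hB := lemB n hn (t := s) (by rw [hs]; linarith) (by rw [hs]; linarith)
    linarith [hmono, heval.le]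


set_option maxHeartbeats 2000000 in
theorem stmt_12 (n : ℕ) (hn : 3 ≤ n)
    (FA : ℝ → ℝ)
    (hFA : ∀ x : ℝ, FA x
      = 2 * x ^ n + (n:ℝ) * x ^ (n-1) * (1 - x)
        - (max (2*x - 1) 0) ^ n - (n:ℝ) * (max (2*x - 1) 0) ^ (n-1) * (1 - x))
    (Ω : (ℝ → ℝ) → ℝ → ℝ)
    (hΩ : ∀ F : ℝ → ℝ, ∀ x : ℝ, Ω F x
      = FA x
        - (∫ y in (max (2*x - 1) 0)..x, ∫ z in (0:ℝ)..((1 + y)/2 - x),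
            2 * (n:ℝ) * ((n:ℝ) - 1) * y ^ (n-2) * F z)
        - (∫ y in (max (max (x - 1/4) 0) (2*x - 1))..x,
            ∫ z in (0:ℝ)..(min (1/4 + y - x) ((1 + y)/2 - x)),
              2 * (n:ℝ) * ((n:ℝ) - 1) * (max (3*y - 2*x - 2*z) 0) ^ (n-2) * F z)
        + (∫ y in (max (1/2 : ℝ) (2*x - 1))..(max (1/2 : ℝ) x),
            ∫ z in (0:ℝ)..((1 + y)/2 - x),
              4 * (n:ℝ) * ((n:ℝ) - 1) * (2*y - 1) ^ (n-2) * F z))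
    (F₁ F₂ : ℝ → ℝ) (hm₁ : Measurable F₁) (hm₂ : Measurable F₂)
    (hb₁ : ∃ C : ℝ, ∀ x ∈ Icc (0:ℝ) 1, |F₁ x| ≤ C)
    (hb₂ : ∃ C : ℝ, ∀ x ∈ Icc (0:ℝ) 1, |F₂ x| ≤ C)
    (x : ℝ) (hx : x ∈ Icc (0:ℝ) 1) :
    |Ω F₁ x - Ω F₂ x|
      ≤ (11/12 : ℝ) * sSup ((fun z => |F₁ z - F₂ z|) '' Icc (0:ℝ) 1) := by
  obtain ⟨C₁, hb₁⟩ := hb₁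
  obtain ⟨C₂, hb₂⟩ := hb₂
  obtain ⟨hx0, hx1⟩ := hx
  set M := sSup ((fun z => |F₁ z - F₂ z|) '' Icc (0:ℝ) 1) with hMdef
  have hz0 : (0:ℝ) ∈ Icc (0:ℝ) 1 := ⟨le_refl 0, zero_le_one⟩
  have hbdd : BddAbove ((fun z => |F₁ z - F₂ z|) '' Icc (0:ℝ) 1) := by
    refine ⟨C₁ + C₂, ?_⟩
    rintro v ⟨z, hz, rfl⟩
    calc |F₁ z - F₂ z| ≤ |F₁ z| + |F₂ z| := abs_sub _ _
      _ ≤ C₁ + C₂ := add_le_add (hb₁ z hz) (hb₂ z hz)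
  have hM : ∀ z ∈ Icc (0:ℝ) 1, |F₁ z - F₂ z| ≤ M := fun z hz => le_csSup hbdd ⟨z, hz, rfl⟩
  have hM0 : 0 ≤ M := le_trans (abs_nonneg _) (hM 0 hz0)
  have hnn1 : (1:ℝ) ≤ (n:ℝ) := by exact_mod_cast Nat.one_le_of_lt hn
  rw [hΩ F₁ x, hΩ F₂ x]
  -- term 2 bound, valid for all x ∈ [0,1]
  have ha₂ : max (max (x - 1/4) 0) (2*x - 1) ≤ x :=
    max_le (max_le (by linarith) hx0) (by linarith)
  have h₂ : ∀ F : ℝ → ℝ, Measurable F → ∀ C : ℝ, (∀ z ∈ Icc (0:ℝ) 1, |F z| ≤ C) →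
      (∫ y in (max (max (x - 1/4) 0) (2*x - 1))..x,
        ∫ z in (0:ℝ)..(min (1/4 + y - x) ((1 + y)/2 - x)),
          2 * (n:ℝ) * ((n:ℝ) - 1) * (max (3*y - 2*x - 2*z) 0) ^ (n-2) * F z)
      = (∫ y in (max (max (x - 1/4) 0) (2*x - 1))..x,
        ∫ z in (0:ℝ)..(max (min (1/4 + y - x) ((1 + y)/2 - x)) 0),
          2 * (n:ℝ) * ((n:ℝ) - 1) * (max (3*y - 2*x - 2*z) 0) ^ (n-2) * F z) := by
    intro F _ C _
    apply intervalIntegral.integral_congr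
    intro y hy
    dsimp only
    rw [uIcc_of_le ha₂] at hy
    have hy1 : x - 1/4 ≤ y := le_trans (le_trans (le_max_left _ _) (le_max_left _ _)) hy.1
    have hy2 : 2*x - 1 ≤ y := le_trans (le_max_right _ _) hy.1
    rw [max_eq_left (le_min (by linarith) (by linarith))]
  have hbnd₂ : |(∫ y in (max (max (x - 1/4) 0) (2*x - 1))..x,
        ∫ z in (0:ℝ)..(min (1/4 + y - x) ((1 + y)/2 - x)),
          2 * (n:ℝ) * ((n:ℝ) - 1) * (max (3*y - 2*x - 2*z) 0) ^ (n-2) * F₁ z)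
      - (∫ y in (max (max (x - 1/4) 0) (2*x - 1))..x,
        ∫ z in (0:ℝ)..(min (1/4 + y - x) ((1 + y)/2 - x)),
          2 * (n:ℝ) * ((n:ℝ) - 1) * (max (3*y - 2*x - 2*z) 0) ^ (n-2) * F₂ z)|
      ≤ M * (1/3) := by
    rw [h₂ F₁ hm₁ C₁ hb₁, h₂ F₂ hm₂ C₂ hb₂]
    have hKmeas : Measurable (Function.uncurry fun y z : ℝ =>
        2 * (n:ℝ) * ((n:ℝ) - 1) * (max (3*y - 2*x - 2*z) 0) ^ (n-2)) := by
      apply Continuous.measurable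
      show Continuous fun p : ℝ × ℝ =>
        2 * (n:ℝ) * ((n:ℝ) - 1) * (max (3*p.1 - 2*x - 2*p.2) 0) ^ (n-2)
      exact continuous_const.mul
        (((((continuous_const.mul continuous_fst).sub continuous_const).sub
          (continuous_const.mul continuous_snd)).max continuous_const).pow _)
    have hK0 : ∀ y ∈ Icc (max (max (x - 1/4) 0) (2*x - 1)) x, ∀ z ∈ Icc (0:ℝ) 1,
        0 ≤ 2 * (n:ℝ) * ((n:ℝ) - 1) * (max (3*y - 2*x - 2*z) 0) ^ (n-2) := by
      intro y _ z _
      have hcc : (0:ℝ) ≤ 2 * (n:ℝ) * ((n:ℝ) - 1) := by nlinarith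
      exact mul_nonneg hcc (pow_nonneg (le_max_right _ _) _)
    have hKb : ∀ y ∈ Icc (max (max (x - 1/4) 0) (2*x - 1)) x, ∀ z ∈ Icc (0:ℝ) 1,
        2 * (n:ℝ) * ((n:ℝ) - 1) * (max (3*y - 2*x - 2*z) 0) ^ (n-2)
          ≤ 2 * (n:ℝ) * ((n:ℝ) - 1) * 3 ^ (n-2) := by
      intro y hy z hz
      have h3 : max (3*y - 2*x - 2*z) 0 ≤ 3 := by
        apply max_le _ (by norm_num)
        have h5 := hy.2
        have h6 := hz.1
        nlinarith [hx1, hx0]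
      have hcc : (0:ℝ) ≤ 2 * (n:ℝ) * ((n:ℝ) - 1) := by nlinarith
      exact mul_le_mul_of_nonneg_left (pow_le_pow_left₀ (le_max_right _ _) h3 _) hcc
    have hLmeas : Measurable (fun y : ℝ => max (min (1/4 + y - x) ((1 + y)/2 - x)) 0) := by
      apply Continuous.measurable
      exact ((((continuous_const.add continuous_id).sub continuous_const).min
        (((continuous_const.add continuous_id).div_const 2).sub continuous_const)).max
          continuous_const)
    have hL0 : ∀ y : ℝ, 0 ≤ max (min (1/4 + y - x) ((1 + y)/2 - x)) 0 :=
      fun y => le_max_right _ _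
    have hL1 : ∀ y ∈ Icc (max (max (x - 1/4) 0) (2*x - 1)) x,
        max (min (1/4 + y - x) ((1 + y)/2 - x)) 0 ≤ 1 := by
      intro y hy
      apply max_le _ zero_le_one
      exact le_trans (min_le_left _ _) (by linarith [hy.2])
    have hcI : IntervalIntegrable (fun y => (n:ℝ)*(max (3*y-2*x) 0)^(n-1)) volume
        (max (max (x - 1/4) 0) (2*x - 1)) x := by
      apply Continuous.intervalIntegrable
      exact continuous_const.mul
        ((((continuous_const.mul continuous_id).sub continuous_const).max
          continuous_const).pow _)
    have hc : ∀ y ∈ Icc (max (max (x - 1/4) 0) (2*x - 1)) x,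
        (∫ z in (0:ℝ)..(max (min (1/4 + y - x) ((1 + y)/2 - x)) 0),
          2 * (n:ℝ) * ((n:ℝ) - 1) * (max (3*y - 2*x - 2*z) 0) ^ (n-2))
          ≤ (n:ℝ)*(max (3*y-2*x) 0)^(n-1) :=
      fun y _ => inner2 n hn (3*y - 2*x) (le_max_right _ _)
    exact term_bound hm₁ hm₂ hb₁ hb₂ hM0 hM hKmeas ha₂ hK0 hKb hLmeas hL0 hL1 hcI hc
      (outer2 n hn hx0 hx1)
  -- term 1 bound (B = 3/8 uniformly)
  have ha₁ : max (2*x - 1) 0 ≤ x := max_le (by linarith) hx0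
  have h₁ : ∀ F : ℝ → ℝ,
      (∫ y in (max (2*x - 1) 0)..x, ∫ z in (0:ℝ)..((1 + y)/2 - x),
          2 * (n:ℝ) * ((n:ℝ) - 1) * y ^ (n-2) * F z)
      = (∫ y in (max (2*x - 1) 0)..x, ∫ z in (0:ℝ)..(max ((1 + y)/2 - x) 0),
          2 * (n:ℝ) * ((n:ℝ) - 1) * y ^ (n-2) * F z) := by
    intro F
    apply intervalIntegral.integral_congr
    intro y hy
    dsimp only
    rw [uIcc_of_le ha₁] at hy
    have hy2 : 2*x - 1 ≤ y := le_trans (le_max_left _ _) hy.1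
    rw [max_eq_left (by linarith : (0:ℝ) ≤ (1 + y)/2 - x)]
  have houter1 : (∫ y in (max (2*x-1) 0)..x,
      2*(n:ℝ)*((n:ℝ)-1)*y^(n-2)*((1+y)/2 - x)) ≤ 3/8 := by
    rcases le_total x (1/2) with hh|hh
    · exact le_trans (outer1a n hn hx0 hh) (by norm_num)
    · exact outer1b n hn hh hx1
  have hLmeas1 : Measurable (fun y : ℝ => max ((1 + y)/2 - x) 0) := by
    apply Continuous.measurable
    exact (((continuous_const.add continuous_id).div_const 2).sub continuous_const).max
      continuous_const
  have hL01 : ∀ y : ℝ, 0 ≤ max ((1 + y)/2 - x) 0 := fun y => le_max_right _ _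
  have hbnd₁ : |(∫ y in (max (2*x - 1) 0)..x, ∫ z in (0:ℝ)..((1 + y)/2 - x),
          2 * (n:ℝ) * ((n:ℝ) - 1) * y ^ (n-2) * F₁ z)
      - (∫ y in (max (2*x - 1) 0)..x, ∫ z in (0:ℝ)..((1 + y)/2 - x),
          2 * (n:ℝ) * ((n:ℝ) - 1) * y ^ (n-2) * F₂ z)| ≤ M * (3/8) := by
    rw [h₁ F₁, h₁ F₂]
    have hKmeas : Measurable (Function.uncurry fun y z : ℝ =>
        2 * (n:ℝ) * ((n:ℝ) - 1) * y ^ (n-2)) := by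
      apply Continuous.measurable
      show Continuous fun p : ℝ × ℝ => 2 * (n:ℝ) * ((n:ℝ) - 1) * p.1 ^ (n-2)
      exact continuous_const.mul (continuous_fst.pow _)
    have hK0 : ∀ y ∈ Icc (max (2*x - 1) 0) x, ∀ z ∈ Icc (0:ℝ) 1,
        0 ≤ 2 * (n:ℝ) * ((n:ℝ) - 1) * y ^ (n-2) := by
      intro y hy z _
      have hy0 : (0:ℝ) ≤ y := le_trans (le_max_right _ _) hy.1
      have hcc : (0:ℝ) ≤ 2 * (n:ℝ) * ((n:ℝ) - 1) := by nlinarith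
      exact mul_nonneg hcc (pow_nonneg hy0 _)
    have hKb : ∀ y ∈ Icc (max (2*x - 1) 0) x, ∀ z ∈ Icc (0:ℝ) 1,
        2 * (n:ℝ) * ((n:ℝ) - 1) * y ^ (n-2) ≤ 2 * (n:ℝ) * ((n:ℝ) - 1) := by
      intro y hy z _
      have hy0 : (0:ℝ) ≤ y := le_trans (le_max_right _ _) hy.1
      have hcc : (0:ℝ) ≤ 2 * (n:ℝ) * ((n:ℝ) - 1) := by nlinarith
      calc 2 * (n:ℝ) * ((n:ℝ) - 1) * y ^ (n-2)
          ≤ 2 * (n:ℝ) * ((n:ℝ) - 1) * 1 :=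
            mul_le_mul_of_nonneg_left (pow_le_one₀ hy0 (le_trans hy.2 hx1)) hcc
        _ = 2 * (n:ℝ) * ((n:ℝ) - 1) := mul_one _
    have hL1 : ∀ y ∈ Icc (max (2*x - 1) 0) x, max ((1 + y)/2 - x) 0 ≤ 1 := by
      intro y hy
      exact max_le (by linarith [hy.2]) zero_le_one
    have hcI : IntervalIntegrable (fun y => 2*(n:ℝ)*((n:ℝ)-1)*y^(n-2)*((1+y)/2 - x))
        volume (max (2*x - 1) 0) x := by
      apply Continuous.intervalIntegrable
      exact (continuous_const.mul (continuous_pow _)).mul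
        (((continuous_const.add continuous_id).div_const 2).sub continuous_const)
    have hc : ∀ y ∈ Icc (max (2*x - 1) 0) x,
        (∫ z in (0:ℝ)..(max ((1 + y)/2 - x) 0), 2 * (n:ℝ) * ((n:ℝ) - 1) * y ^ (n-2))
          ≤ 2*(n:ℝ)*((n:ℝ)-1)*y^(n-2)*((1+y)/2 - x) := by
      intro y hy
      have hy2 : 2*x - 1 ≤ y := le_trans (le_max_left _ _) hy.1
      rw [intervalIntegral.integral_const, smul_eq_mul, sub_zero,
        max_eq_left (by linarith : (0:ℝ) ≤ (1 + y)/2 - x)]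
      exact le_of_eq (by ring)
    exact term_bound hm₁ hm₂ hb₁ hb₂ hM0 hM hKmeas ha₁ hK0 hKb hLmeas1 hL01 hL1 hcI hc
      houter1
  rcases le_total x (1/2) with hhalf|hhalf
  · -- x ≤ 1/2 : third term vanishes
    rw [max_eq_left (by linarith : 2*x - 1 ≤ (1/2:ℝ)), max_eq_left hhalf]
    simp only [intervalIntegral.integral_same]
    have key : ∀ a b c d : ℝ, |a - c| ≤ M*(3/8) → |b - d| ≤ M*(1/3) →
        |FA x - a - b + 0 - (FA x - c - d + 0)| ≤ 11/12 * M := by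
      intro a b c d h1 h2
      have he : FA x - a - b + 0 - (FA x - c - d + 0) = (c - a) + (d - b) := by ring
      rw [he]
      calc |(c - a) + (d - b)| ≤ |c - a| + |d - b| := abs_add_le _ _
        _ = |a - c| + |b - d| := by rw [abs_sub_comm c a, abs_sub_comm d b]
        _ ≤ M*(3/8) + M*(1/3) := add_le_add h1 h2
        _ ≤ 11/12 * M := by linarith
    exact key _ _ _ _ hbnd₁ hbnd₂
  · -- x ≥ 1/2
    rw [max_eq_right hhalf]
    have ha₃ : max (1/2:ℝ) (2*x - 1) ≤ x := max_le hhalf (by linarith)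
    have h₃ : ∀ F : ℝ → ℝ,
        (∫ y in (max (1/2:ℝ) (2*x - 1))..x, ∫ z in (0:ℝ)..((1 + y)/2 - x),
            4 * (n:ℝ) * ((n:ℝ) - 1) * (2*y - 1) ^ (n-2) * F z)
        = (∫ y in (max (1/2:ℝ) (2*x - 1))..x, ∫ z in (0:ℝ)..(max ((1 + y)/2 - x) 0),
            4 * (n:ℝ) * ((n:ℝ) - 1) * (2*y - 1) ^ (n-2) * F z) := by
      intro F
      apply intervalIntegral.integral_congr
      intro y hy
      dsimp only
      rw [uIcc_of_le ha₃] at hy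
      have hy2 : 2*x - 1 ≤ y := le_trans (le_max_right _ _) hy.1
      rw [max_eq_left (by linarith : (0:ℝ) ≤ (1 + y)/2 - x)]
    have hbnd₃ : |(∫ y in (max (1/2:ℝ) (2*x - 1))..x, ∫ z in (0:ℝ)..((1 + y)/2 - x),
            4 * (n:ℝ) * ((n:ℝ) - 1) * (2*y - 1) ^ (n-2) * F₁ z)
        - (∫ y in (max (1/2:ℝ) (2*x - 1))..x, ∫ z in (0:ℝ)..((1 + y)/2 - x),
            4 * (n:ℝ) * ((n:ℝ) - 1) * (2*y - 1) ^ (n-2) * F₂ z)| ≤ M * (3/16) := by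
      rw [h₃ F₁, h₃ F₂]
      have hKmeas : Measurable (Function.uncurry fun y z : ℝ =>
          4 * (n:ℝ) * ((n:ℝ) - 1) * (2*y - 1) ^ (n-2)) := by
        apply Continuous.measurable
        show Continuous fun p : ℝ × ℝ => 4 * (n:ℝ) * ((n:ℝ) - 1) * (2*p.1 - 1) ^ (n-2)
        exact continuous_const.mul
          (((continuous_const.mul continuous_fst).sub continuous_const).pow _)
      have hK0 : ∀ y ∈ Icc (max (1/2:ℝ) (2*x - 1)) x, ∀ z ∈ Icc (0:ℝ) 1,
          0 ≤ 4 * (n:ℝ) * ((n:ℝ) - 1) * (2*y - 1) ^ (n-2) := by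
        intro y hy z _
        have hy0 : (1/2:ℝ) ≤ y := le_trans (le_max_left _ _) hy.1
        have hcc : (0:ℝ) ≤ 4 * (n:ℝ) * ((n:ℝ) - 1) := by nlinarith
        exact mul_nonneg hcc (pow_nonneg (by linarith) _)
      have hKb : ∀ y ∈ Icc (max (1/2:ℝ) (2*x - 1)) x, ∀ z ∈ Icc (0:ℝ) 1,
          4 * (n:ℝ) * ((n:ℝ) - 1) * (2*y - 1) ^ (n-2) ≤ 4 * (n:ℝ) * ((n:ℝ) - 1) := by
        intro y hy z _
        have hy0 : (1/2:ℝ) ≤ y := le_trans (le_max_left _ _) hy.1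
        have hcc : (0:ℝ) ≤ 4 * (n:ℝ) * ((n:ℝ) - 1) := by nlinarith
        calc 4 * (n:ℝ) * ((n:ℝ) - 1) * (2*y - 1) ^ (n-2)
            ≤ 4 * (n:ℝ) * ((n:ℝ) - 1) * 1 :=
              mul_le_mul_of_nonneg_left
                (pow_le_one₀ (by linarith) (by linarith [hy.2, hx1])) hcc
          _ = 4 * (n:ℝ) * ((n:ℝ) - 1) := mul_one _
      have hL1 : ∀ y ∈ Icc (max (1/2:ℝ) (2*x - 1)) x, max ((1 + y)/2 - x) 0 ≤ 1 := by
        intro y hy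
        exact max_le (by linarith [hy.2]) zero_le_one
      have hcI : IntervalIntegrable
          (fun y => 4*(n:ℝ)*((n:ℝ)-1)*(2*y-1)^(n-2)*((1+y)/2 - x))
          volume (max (1/2:ℝ) (2*x - 1)) x := by
        apply Continuous.intervalIntegrable
        exact (continuous_const.mul
          (((continuous_const.mul continuous_id).sub continuous_const).pow _)).mul
          (((continuous_const.add continuous_id).div_const 2).sub continuous_const)
      have hc : ∀ y ∈ Icc (max (1/2:ℝ) (2*x - 1)) x,
          (∫ z in (0:ℝ)..(max ((1 + y)/2 - x) 0),
            4 * (n:ℝ) * ((n:ℝ) - 1) * (2*y - 1) ^ (n-2))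
            ≤ 4*(n:ℝ)*((n:ℝ)-1)*(2*y-1)^(n-2)*((1+y)/2 - x) := by
        intro y hy
        have hy2 : 2*x - 1 ≤ y := le_trans (le_max_right _ _) hy.1
        rw [intervalIntegral.integral_const, smul_eq_mul, sub_zero,
          max_eq_left (by linarith : (0:ℝ) ≤ (1 + y)/2 - x)]
        exact le_of_eq (by ring)
      exact term_bound hm₁ hm₂ hb₁ hb₂ hM0 hM hKmeas ha₃ hK0 hKb hLmeas1 hL01 hL1 hcI hc
        (outer3 n hn hhalf hx1)
    have key : ∀ a b c e d f : ℝ, |a - d| ≤ M*(3/8) → |b - e| ≤ M*(1/3) →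
        |c - f| ≤ M*(3/16) →
        |FA x - a - b + c - (FA x - d - e + f)| ≤ 11/12 * M := by
      intro a b c e d f h1 h2 h3
      have he : FA x - a - b + c - (FA x - d - e + f) = ((d - a) + (e - b)) + (c - f) := by
        ring
      rw [he]
      calc |((d - a) + (e - b)) + (c - f)| ≤ |(d - a) + (e - b)| + |c - f| := abs_add_le _ _
        _ ≤ |d - a| + |e - b| + |c - f| := by
            have := abs_add_le (d - a) (e - b)
            linarith
        _ = |a - d| + |b - e| + |c - f| := by rw [abs_sub_comm d a, abs_sub_comm e b]
        _ ≤ M*(3/8) + M*(1/3) + M*(3/16) := by linarith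
        _ ≤ 11/12 * M := by linarith
    exact key _ _ _ _ _ _ hbnd₁ hbnd₂ hbnd₃
end

section
/- For every integer n ≥ 2 and every x ∈ [0,1], letting t⁺ denote max(t,0), the function f_n(x) = x^(n−1)·(n − x − n·x) + ((2x−1)⁺)^n satisfies f_n(x) ≤ 1/3. -/
open Set

lemma bern2 (n : ℕ) (d : ℝ) (hd : 0 ≤ d) :
    1 + n*d + n*(n-1)/2*d^2 ≤ (1+d)^n := by
  induction n with
  | zero => norm_num
  | succ n ih =>
    have h1 : (0:ℝ) ≤ 1 + d := by linarith
    have h2 : (1 + n*d + n*(n-1)/2*d^2) * (1+d) ≤ (1+d)^n * (1+d) :=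
      mul_le_mul_of_nonneg_right ih h1
    have h3 : (1+d)^(n+1) = (1+d)^n * (1+d) := pow_succ _ _
    have hnn : (0:ℝ) ≤ (n:ℝ)*((n:ℝ)-1) := by
      rcases Nat.eq_zero_or_pos n with h|h
      · simp [h]
      · have : (1:ℝ) ≤ (n:ℝ) := by exact_mod_cast h
        nlinarith
    push_cast
    nlinarith [mul_nonneg hnn (mul_nonneg (mul_nonneg hd hd) hd)]

lemma keyG_large (n : ℕ) (hn : 9 ≤ n) (d : ℝ) (hd0 : 0 ≤ d) (hd1 : d ≤ 1) :
    3 ≤ (1+d)^n + 3*(1-d)^n := by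
  have hn9 : (9:ℝ) ≤ (n:ℝ) := by exact_mod_cast hn
  rcases le_or_gt (3/2) ((n:ℝ)*d) with hbig | hsmall
  · have hb := bern2 n d hd0
    have hun : (0:ℝ) ≤ 3*(1-d)^n := by
      have : (0:ℝ) ≤ (1-d)^n := pow_nonneg (by linarith) n
      linarith
    nlinarith [sq_nonneg ((n:ℝ)*d - 3/2)]
  · have hd6 : d ≤ 1/6 := by nlinarith
    have hnd : (n:ℝ)*d*d ≤ (3/2)*d := mul_le_mul_of_nonneg_right hsmall.le hd0
    have hnd2 : (n:ℝ)*d^2 ≤ 1/4 := by nlinarith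
    have hq : (3:ℝ)/4 ≤ (1-d^2)^n := by
      have hb := one_add_mul_le_pow (by nlinarith : (-2:ℝ) ≤ -d^2) n
      have e : (1:ℝ) + -d^2 = 1 - d^2 := by ring
      rw [e] at hb
      nlinarith [hb]
    have hP1 : (1:ℝ) ≤ (1+d)^n := one_le_pow₀ (by linarith)
    have hPq : (1+d)^n * (1-d)^n = (1-d^2)^n := by
      rw [← mul_pow]; congr 1; ring
    nlinarith [sq_nonneg ((1+d)^n - 3/2), hq, hPq, hP1]

set_option maxHeartbeats 1000000 in
lemma keyG (n : ℕ) (hn : 2 ≤ n) (u : ℝ) (h0 : 0 ≤ u) (h1 : u ≤ 1) :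
    3 ≤ (2-u)^n + 3*u^n := by
  rcases le_or_gt 9 n with h9 | h9
  · have h := keyG_large n h9 (1-u) (by linarith) (by linarith)
    have e1 : (1:ℝ)+(1-u) = 2-u := by ring
    have e2 : (1:ℝ)-(1-u) = u := by ring
    rw [e1, e2] at h
    exact h
  · interval_cases n
    · nlinarith [sq_nonneg (2*u-1)]
    · nlinarith [sq_nonneg (u - 73/100), mul_nonneg h0 (sq_nonneg (u - 73/100)), mul_nonneg (sub_nonneg.2 h1) (sq_nonneg (u - 73/100))]
    · nlinarith [sq_nonneg (u - 82/100), mul_nonneg h0 (sq_nonneg (u - 82/100)), mul_nonneg (sub_nonneg.2 h1) (sq_nonneg (u - 82/100)), sq_nonneg ((u-82/100)*u), sq_nonneg ((u-82/100)*(1-u))]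
    · nlinarith [sq_nonneg (u - 86/100), mul_nonneg h0 (sq_nonneg (u - 86/100)), mul_nonneg (sub_nonneg.2 h1) (sq_nonneg (u - 86/100)), sq_nonneg ((u-86/100)*u), sq_nonneg ((u-86/100)*(1-u)), mul_nonneg h0 (sq_nonneg ((u-86/100)*u)), mul_nonneg (sub_nonneg.2 h1) (sq_nonneg ((u-86/100)*u))]
    · nlinarith [sq_nonneg (u - 89/100), mul_nonneg h0 (sq_nonneg (u - 89/100)), mul_nonneg (sub_nonneg.2 h1) (sq_nonneg (u - 89/100)), sq_nonneg ((u-89/100)*u), sq_nonneg ((u-89/100)*(1-u)), sq_nonneg ((u-89/100)*u^2), mul_nonneg h0 (sq_nonneg ((u-89/100)*u)), mul_nonneg (sub_nonneg.2 h1) (sq_nonneg ((u-89/100)*u))]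
    · nlinarith [sq_nonneg (u - 91/100), mul_nonneg h0 (sq_nonneg (u - 91/100)), mul_nonneg (sub_nonneg.2 h1) (sq_nonneg (u - 91/100)), sq_nonneg ((u-91/100)*u), sq_nonneg ((u-91/100)*(1-u)), sq_nonneg ((u-91/100)*u^2), mul_nonneg h0 (sq_nonneg ((u-91/100)*u^2)), mul_nonneg (sub_nonneg.2 h1) (sq_nonneg ((u-91/100)*u^2))]
    · nlinarith [sq_nonneg (u - 92/100), mul_nonneg h0 (sq_nonneg (u - 92/100)), mul_nonneg (sub_nonneg.2 h1) (sq_nonneg (u - 92/100)), sq_nonneg ((u-92/100)*u), sq_nonneg ((u-92/100)*(1-u)), sq_nonneg ((u-92/100)*u^2), sq_nonneg ((u-92/100)*u^3), mul_nonneg h0 (sq_nonneg ((u-92/100)*u^2)), mul_nonneg (sub_nonneg.2 h1) (sq_nonneg ((u-92/100)*u^2))]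

lemma lemA_s13 (n : ℕ) (hn : 2 ≤ n) (x : ℝ) (hx0 : 0 ≤ x) (hx1 : x ≤ 1) :
    x^n - (max (2*x-1) 0)^n ≤ 1/3 := by
  rcases le_or_gt x (1/2) with hx2 | hx2
  · have hm : max (2*x-1) 0 = 0 := max_eq_right (by linarith)
    rw [hm]
    have h2 : x^n ≤ x^2 := pow_le_pow_of_le_one hx0 hx1 hn
    have hz : (0:ℝ)^n = 0 := zero_pow (by omega)
    rw [hz]
    nlinarith
  · have hxpos : 0 < x := by linarith
    have hy0 : (0:ℝ) ≤ 2*x-1 := by linarith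
    rw [max_eq_left hy0]
    set u := (2*x-1)/x with hu
    have hu0 : 0 ≤ u := div_nonneg hy0 hxpos.le
    have hu1 : u ≤ 1 := (div_le_one hxpos).2 (by linarith)
    have hG := keyG n hn u hu0 hu1
    have h1 : (2-u)*x = 1 := by rw [hu, sub_mul, div_mul_cancel₀ _ hxpos.ne']; ring
    have h2 : u*x = 2*x-1 := by rw [hu, div_mul_cancel₀ _ hxpos.ne']
    have e1 : (2-u)^n * x^n = 1 := by rw [← mul_pow, h1, one_pow]
    have e2 : u^n * x^n = (2*x-1)^n := by rw [← mul_pow, h2]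
    have hxn : (0:ℝ) ≤ x^n := pow_nonneg hxpos.le n
    have := mul_le_mul_of_nonneg_right hG hxn
    nlinarith [this, e1, e2]

theorem stmt_13' (n : ℕ) (hn : 2 ≤ n) (x : ℝ) (hx0 : 0 ≤ x) (hx1 : x ≤ 1) :
    x ^ (n-1) * ((n:ℝ) - x - (n:ℝ) * x) + (max (2*x - 1) 0) ^ n ≤ 1/3 := by
  induction n, hn using Nat.le_induction with
  | base =>
    norm_num
    rcases le_or_gt (2*x-1) 0 with h | h
    · rw [max_eq_right h]
      nlinarith [sq_nonneg (x - 1/3)]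
    · rw [max_eq_left h.le]
      nlinarith [sq_nonneg (1-x)]
  | succ n hn ih =>
    obtain ⟨k, rfl⟩ : ∃ k, n = k + 1 := ⟨n-1, (Nat.succ_pred_eq_of_pos (by omega)).symm⟩
    have hA := lemA_s13 (k+1) (by omega) x hx0 hx1
    have hx1' : (0:ℝ) ≤ 1 - x := by linarith
    simp only [Nat.add_sub_cancel] at ih ⊢
    push_cast at ih ⊢
    have hih := mul_le_mul_of_nonneg_left ih hx0
    have hAA := mul_le_mul_of_nonneg_left hA hx1'
    rcases le_or_gt (2*x-1) 0 with h | h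
    · rw [max_eq_right h] at ih hA hih hAA ⊢
      rw [zero_pow (by omega : k+1 ≠ 0)] at hA hih hAA ih
      rw [zero_pow (by omega : k+1+1 ≠ 0)]
      have e : x^(k+1) * (((k:ℝ)+1+1) - x - ((k:ℝ)+1+1)*x) + 0
          = x*(x^k*(((k:ℝ)+1) - x - ((k:ℝ)+1)*x) + 0) + (1-x)*(x^(k+1) - 0) := by ring
      rw [e]
      linarith [hih, hAA]
    · rw [max_eq_left h.le] at ih hA hih hAA ⊢
      have e : x^(k+1) * (((k:ℝ)+1+1) - x - ((k:ℝ)+1+1)*x) + (2*x-1)^(k+1+1)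
          = x*(x^k*(((k:ℝ)+1) - x - ((k:ℝ)+1)*x) + (2*x-1)^(k+1))
            + (1-x)*(x^(k+1) - (2*x-1)^(k+1)) := by ring
      rw [e]
      linarith [hih, hAA]

theorem stmt_13 (n : ℕ) (hn : 2 ≤ n) (x : ℝ) (hx : x ∈ Icc (0:ℝ) 1) :
    x ^ (n-1) * ((n:ℝ) - x - (n:ℝ) * x) + (max (2*x - 1) 0) ^ n ≤ 1/3 :=
  stmt_13' n hn x hx.1 hx.2
end

section
/- Let n ≥ 2 be an integer and let F : [0,1] → ℝ be measurable with 0 ≤ F(z) ≤ 1 for all z ∈ [0,1]. Then the function ΩF(x) = n·x^(n-1) − (n−1)·x^n − 2n(n−1)·∫_{max(2x−1,0)}^{x} y^(n−2) · ( ∫₀^{(1+y)/2 − x} F(z) dz ) dy satisfies x^n ≤ ΩF(x) ≤ n·x^(n-1) − (n−1)·x^n for all x ∈ [0,1]. -/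
open Set

theorem stmt_15 (n : ℕ) (hn : 2 ≤ n) (F : ℝ → ℝ) (hm : Measurable F)
    (hF : ∀ z ∈ Icc (0:ℝ) 1, 0 ≤ F z ∧ F z ≤ 1)
    (x : ℝ) (hx : x ∈ Icc (0:ℝ) 1) :
    x ^ n ≤ (n:ℝ) * x ^ (n-1) - ((n:ℝ) - 1) * x ^ n
        - 2 * (n:ℝ) * ((n:ℝ) - 1) *
          (∫ y in (max (2*x - 1) 0)..x, y ^ (n-2) * ∫ z in (0:ℝ)..((1 + y)/2 - x), F z) ∧
    (n:ℝ) * x ^ (n-1) - ((n:ℝ) - 1) * x ^ n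
        - 2 * (n:ℝ) * ((n:ℝ) - 1) *
          (∫ y in (max (2*x - 1) 0)..x, y ^ (n-2) * ∫ z in (0:ℝ)..((1 + y)/2 - x), F z)
      ≤ (n:ℝ) * x ^ (n-1) - ((n:ℝ) - 1) * x ^ n := by
  obtain ⟨hx0, hx1⟩ := hx
  obtain ⟨k, rfl⟩ : ∃ k, n = k + 2 := ⟨n - 2, by omega⟩
  simp only [show k + 2 - 1 = k + 1 from rfl, show k + 2 - 2 = k from rfl]
  set a := max (2*x - 1) 0 with ha
  have ha0 : (0:ℝ) ≤ a := le_max_right _ _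
  have hax : a ≤ x := max_le (by linarith) hx0
  have haL : 2*x - 1 ≤ a := le_max_left _ _
  -- F is integrable on [0,1]
  have hFi : MeasureTheory.IntegrableOn F (Icc (0:ℝ) 1) := by
    have hb : ∀ᵐ z ∂(MeasureTheory.volume.restrict (Icc (0:ℝ) 1)), ‖F z‖ ≤ 1 := by
      filter_upwards [MeasureTheory.ae_restrict_mem measurableSet_Icc] with z hz
      rw [Real.norm_eq_abs, abs_le]
      exact ⟨by linarith [(hF z hz).1], (hF z hz).2⟩
    exact (MeasureTheory.integrable_const 1).mono'
      hm.aestronglyMeasurable.restrict hb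
  set g : ℝ → ℝ := fun y => ∫ z in (0:ℝ)..((1 + y)/2 - x), F z with hg
  have hc : ∀ y ∈ Icc a x, 0 ≤ (1 + y)/2 - x ∧ (1 + y)/2 - x ≤ 1 := by
    intro y hy
    constructor
    · linarith [haL.trans hy.1]
    · linarith [hy.2, hx0]
  have hFi' : ∀ y ∈ Icc a x, IntervalIntegrable F MeasureTheory.volume 0 ((1 + y)/2 - x) := by
    intro y hy
    rw [intervalIntegrable_iff_integrableOn_Icc_of_le (hc y hy).1]
    exact hFi.mono_set (Icc_subset_Icc le_rfl (hc y hy).2)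
  have hg0 : ∀ y ∈ Icc a x, 0 ≤ g y := by
    intro y hy
    apply intervalIntegral.integral_nonneg (hc y hy).1
    intro u hu
    exact (hF u ⟨hu.1, hu.2.trans (hc y hy).2⟩).1
  have hgle : ∀ y ∈ Icc a x, g y ≤ (1 - x)/2 := by
    intro y hy
    have h1 : g y ≤ ∫ z in (0:ℝ)..((1 + y)/2 - x), (1:ℝ) := by
      apply intervalIntegral.integral_mono_on (hc y hy).1 (hFi' y hy)
        intervalIntegrable_const
      intro u hu
      exact (hF u ⟨hu.1, hu.2.trans (hc y hy).2⟩).2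
    simp only [intervalIntegral.integral_const, smul_eq_mul, mul_one] at h1
    have : (1 + y)/2 - x ≤ (1 - x)/2 := by linarith [hy.2]
    linarith
  set I := ∫ y in a..x, y ^ k * g y with hI
  have hI0 : 0 ≤ I :=
    intervalIntegral.integral_nonneg hax
      (fun y hy => mul_nonneg (pow_nonneg (ha0.trans hy.1) k) (hg0 y hy))
  have hk1 : (0:ℝ) < (k:ℝ) + 1 := by positivity
  have hRval : (∫ y in a..x, y ^ k * ((1 - x)/2))
      = (x ^ (k+1) - a ^ (k+1)) / ((k:ℝ)+1) * ((1 - x)/2) := by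
    rw [intervalIntegral.integral_mul_const, integral_pow]
  have hapow : a ^ (k+1) ≤ x ^ (k+1) := pow_le_pow_left₀ ha0 hax _
  have hapow0 : (0:ℝ) ≤ a ^ (k+1) := pow_nonneg ha0 _
  have hIle : I ≤ (x ^ (k+1) - a ^ (k+1)) / ((k:ℝ)+1) * ((1 - x)/2) := by
    by_cases hInt : IntervalIntegrable (fun y => y ^ k * g y) MeasureTheory.volume a x
    · rw [← hRval]
      apply intervalIntegral.integral_mono_on hax hInt
        (((continuous_pow k).mul continuous_const).intervalIntegrable _ _)
      intro y hy
      exact mul_le_mul_of_nonneg_left (hgle y hy) (pow_nonneg (ha0.trans hy.1) k)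
    · rw [hI, intervalIntegral.integral_undef hInt]
      have h1 : (0:ℝ) ≤ (x ^ (k+1) - a ^ (k+1)) / ((k:ℝ)+1) :=
        div_nonneg (by linarith) hk1.le
      have h2 : (0:ℝ) ≤ (1 - x)/2 := by linarith
      exact mul_nonneg h1 h2
  -- key bound
  have hkey : 2 * ((k:ℝ)+2) * (((k:ℝ)+2) - 1) * I
      ≤ ((k:ℝ)+2) * x ^ (k+1) - ((k:ℝ)+2) * x ^ (k+2) := by
    have hIle2 : I ≤ x ^ (k+1) / ((k:ℝ)+1) * ((1 - x)/2) := by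
      refine hIle.trans ?_
      have h3 : (x ^ (k+1) - a ^ (k+1)) / ((k:ℝ)+1) ≤ x ^ (k+1) / ((k:ℝ)+1) :=
        div_le_div_of_nonneg_right (by linarith) hk1.le
      exact mul_le_mul_of_nonneg_right h3 (by linarith)
    have hC : (0:ℝ) ≤ 2 * ((k:ℝ)+2) * (((k:ℝ)+2) - 1) := by
      have hk0 : (0:ℝ) ≤ (k:ℝ) := Nat.cast_nonneg k
      nlinarith
    have := mul_le_mul_of_nonneg_left hIle2 hC
    have heq : 2 * ((k:ℝ)+2) * (((k:ℝ)+2) - 1) * (x ^ (k+1) / ((k:ℝ)+1) * ((1 - x)/2))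
        = ((k:ℝ)+2) * x ^ (k+1) - ((k:ℝ)+2) * x ^ (k+2) := by
      have hx2 : x ^ (k+2) = x ^ (k+1) * x := by ring
      rw [hx2]
      field_simp
      ring
    linarith [heq ▸ this]
  have hC0 : (0:ℝ) ≤ 2 * ((k:ℝ)+2) * (((k:ℝ)+2) - 1) := by
    have hk0 : (0:ℝ) ≤ (k:ℝ) := Nat.cast_nonneg k
    nlinarith
  push_cast
  constructor
  · nlinarith [hkey]
  · nlinarith [mul_nonneg hC0 hI0]
end

section
/- For every integer n ≥ 2, there exists a unique bounded measurable function F : [0,1] → ℝ satisfying F(x) = n·x^(n-1) − (n−1)·x^n − 2n(n−1)·∫_{max(2x−1,0)}^{x} y^(n−2) · ( ∫₀^{(1+y)/2 − x} F(z) dz ) dy for all x ∈ [0,1]. -/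
open Set MeasureTheory intervalIntegral BoundedContinuousFunction

noncomputable def primF (F : ℝ → ℝ) (t : ℝ) : ℝ := ∫ z in (0:ℝ)..t, F z

noncomputable def coreF (n : ℕ) (F : ℝ → ℝ) (x : ℝ) : ℝ :=
  (n : ℝ) * x ^ (n-1) - ((n : ℝ) - 1) * x ^ n
    - 2 * (n : ℝ) * ((n : ℝ) - 1) *
      ∫ y in (max (2*x - 1) 0)..x, y ^ (n-2) * primF F ((1 + y)/2 - x)


lemma pow_ineq (n : ℕ) (hn : 2 ≤ n) {x : ℝ} (h0 : 0 ≤ x) (h1 : x ≤ 1) :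
    (n : ℝ) * x ^ (n - 1) * (1 - x) ≤ 1 / 2 := by
  obtain ⟨k, rfl⟩ : ∃ k, n = k + 1 := ⟨n - 1, by omega⟩
  have hk : 1 ≤ k := by omega
  have hkr : (1 : ℝ) ≤ (k : ℝ) := by exact_mod_cast hk
  have hkpos : (0 : ℝ) < k := by linarith
  have hk1pos : (0 : ℝ) < (k : ℝ) + 1 := by linarith
  simp only [Nat.add_sub_cancel]
  set A : ℝ := x * ((k : ℝ) + 1) / k with hA
  set B : ℝ := (1 - x) * ((k : ℝ) + 1) with hB
  have hA0 : 0 ≤ A := by positivity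
  have hB0 : 0 ≤ B := by nlinarith
  have hgeo : A ^ ((k : ℝ) / ((k : ℝ) + 1)) * B ^ ((1 : ℝ) / ((k : ℝ) + 1)) ≤ 1 := by
    have h := Real.geom_mean_le_arith_mean2_weighted
      (by positivity : (0:ℝ) ≤ (k : ℝ) / ((k : ℝ) + 1))
      (by positivity : (0:ℝ) ≤ (1 : ℝ) / ((k : ℝ) + 1)) hA0 hB0
      (by field_simp)
    calc A ^ ((k : ℝ) / ((k : ℝ) + 1)) * B ^ ((1 : ℝ) / ((k : ℝ) + 1))
        ≤ (k : ℝ) / ((k : ℝ) + 1) * A + (1 : ℝ) / ((k : ℝ) + 1) * B := h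
      _ = 1 := by rw [hA, hB]; field_simp; ring
  have hpow : A ^ k * B ≤ 1 := by
    have h2 : (A ^ ((k : ℝ) / ((k : ℝ) + 1)) * B ^ ((1 : ℝ) / ((k : ℝ) + 1))) ^ ((k : ℝ) + 1) ≤ 1 :=
      Real.rpow_le_one (by positivity) hgeo (by positivity)
    have e1 : (k : ℝ) / ((k : ℝ) + 1) * ((k : ℝ) + 1) = (k : ℝ) := by field_simp
    have e2 : (1 : ℝ) / ((k : ℝ) + 1) * ((k : ℝ) + 1) = 1 := by field_simp
    rw [Real.mul_rpow (by positivity) (by positivity), ← Real.rpow_mul hA0, ← Real.rpow_mul hB0,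
      e1, e2, Real.rpow_one, Real.rpow_natCast] at h2
    exact h2
  have hber : (2 : ℝ) * (k : ℝ) ^ k ≤ ((k : ℝ) + 1) ^ k := by
    have hnn : (0:ℝ) ≤ 1 / (k:ℝ) := by positivity
    have h := one_add_mul_le_pow (le_trans (by norm_num : (-2:ℝ) ≤ 0) hnn) k
    have e : (k : ℝ) * (1 / (k : ℝ)) = 1 := by field_simp
    have h' : (2 : ℝ) ≤ (1 + 1 / (k : ℝ)) ^ k := by rw [e] at h; linarith
    have e3 : (1:ℝ) + 1/(k:ℝ) = ((k:ℝ)+1)/(k:ℝ) := by field_simp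
    rw [e3, div_pow] at h'
    have hkk : (0 : ℝ) < (k : ℝ) ^ k := by positivity
    rw [le_div_iff₀ hkk] at h'
    linarith
  have key : ((k : ℝ) + 1) * x ^ k * (1 - x) ≤ ((k : ℝ) / ((k : ℝ) + 1)) ^ k := by
    have hxA : x ^ k = A ^ k * ((k : ℝ) / ((k : ℝ) + 1)) ^ k := by
      rw [← mul_pow]; congr 1; rw [hA]; field_simp
    have heq : ((k : ℝ) + 1) * x ^ k * (1 - x) = ((k : ℝ) / ((k : ℝ) + 1)) ^ k * (A ^ k * B) := by
      rw [hxA, hB]; ring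
    rw [heq]
    calc ((k : ℝ) / ((k : ℝ) + 1)) ^ k * (A ^ k * B) ≤ ((k : ℝ) / ((k : ℝ) + 1)) ^ k * 1 :=
          mul_le_mul_of_nonneg_left hpow (by positivity)
      _ = _ := mul_one _
  have hfin : ((k : ℝ) / ((k : ℝ) + 1)) ^ k ≤ 1 / 2 := by
    rw [div_pow, div_le_div_iff₀ (by positivity) (by norm_num)]
    linarith
  push_cast
  linarith

lemma contOn_aux (n : ℕ) (F : ℝ → ℝ) (hF : IntegrableOn F (Icc (0:ℝ) 1))
    {x : ℝ} (hx : x ∈ Icc (0:ℝ) 1) :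
    ContinuousOn (fun y => y ^ (n-2) * primF F ((1 + y)/2 - x)) (Icc (max (2*x-1) 0) x) := by
  obtain ⟨hx0, hx1⟩ := hx
  have hP : ContinuousOn (primF F) (Icc (0:ℝ) (1/2)) := by
    have : IntegrableOn F (uIcc (0:ℝ) (1/2)) := by
      apply hF.mono_set
      rw [uIcc_of_le (by norm_num)]
      exact Icc_subset_Icc le_rfl (by norm_num)
    unfold primF
    simpa [uIcc_of_le (by norm_num : (0:ℝ) ≤ 1/2), primF] using
      intervalIntegral.continuousOn_primitive_interval (a := 0) (b := 1/2) this
  apply ContinuousOn.mul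
  · exact (continuous_pow _).continuousOn
  · apply hP.comp (Continuous.continuousOn (by continuity))
    intro y hy
    simp only [mem_Icc] at hy ⊢
    obtain ⟨hy1, hy2⟩ := hy
    have hb1 : 2*x - 1 ≤ y := le_trans (le_max_left _ _) hy1
    have hb2 : 0 ≤ y := le_trans (le_max_right _ _) hy1
    exact ⟨by linarith, by linarith⟩

lemma core_diff_bound (n : ℕ) (hn : 2 ≤ n) (F G : ℝ → ℝ)
    (hFi : IntegrableOn F (Icc (0:ℝ) 1)) (hGi : IntegrableOn G (Icc (0:ℝ) 1))
    (B : ℝ) (hB : ∀ z ∈ Icc (0:ℝ) 1, |F z - G z| ≤ B)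
    {x : ℝ} (hx : x ∈ Icc (0:ℝ) 1) :
    |coreF n F x - coreF n G x| ≤ B / 2 := by
  obtain ⟨hx0, hx1⟩ := hx
  have hB0 : 0 ≤ B := le_trans (abs_nonneg _) (hB 0 (by norm_num))
  set l := max (2*x - 1) 0 with hl
  have hl0 : 0 ≤ l := le_max_right _ _
  have hlx : l ≤ x := max_le (by linarith) hx0
  -- integrability of the two integrands
  have hu : IntervalIntegrable (fun y => y ^ (n-2) * primF F ((1 + y)/2 - x)) volume l x := by
    apply ContinuousOn.intervalIntegrable
    rw [uIcc_of_le hlx]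
    exact contOn_aux n F hFi ⟨hx0, hx1⟩
  have hv : IntervalIntegrable (fun y => y ^ (n-2) * primF G ((1 + y)/2 - x)) volume l x := by
    apply ContinuousOn.intervalIntegrable
    rw [uIcc_of_le hlx]
    exact contOn_aux n G hGi ⟨hx0, hx1⟩
  -- the difference
  have hdiff : coreF n F x - coreF n G x
      = - (2 * (n : ℝ) * ((n : ℝ) - 1) *
          ∫ y in l..x, (y ^ (n-2) * primF F ((1 + y)/2 - x) - y ^ (n-2) * primF G ((1 + y)/2 - x))) := by
    rw [intervalIntegral.integral_sub hu hv]
    simp only [coreF, ← hl]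
    ring
  -- pointwise bound on the integrand difference
  have hpoint : ∀ y ∈ Icc l x,
      |y ^ (n-2) * primF F ((1 + y)/2 - x) - y ^ (n-2) * primF G ((1 + y)/2 - x)|
        ≤ y ^ (n-2) * ((1 - x)/2 * B) := by
    intro y ⟨hy1, hy2⟩
    have hy0 : 0 ≤ y := le_trans hl0 hy1
    have ht0 : 0 ≤ (1 + y)/2 - x := by
      have : 2*x - 1 ≤ y := le_trans (le_max_left _ _) hy1
      linarith
    have ht1 : (1 + y)/2 - x ≤ (1 - x)/2 := by linarith
    have hFt : IntervalIntegrable F volume 0 ((1+y)/2 - x) := by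
      apply (hFi.mono_set _).intervalIntegrable
      rw [uIcc_of_le ht0]
      exact Icc_subset_Icc le_rfl (by linarith)
    have hGt : IntervalIntegrable G volume 0 ((1+y)/2 - x) := by
      apply (hGi.mono_set _).intervalIntegrable
      rw [uIcc_of_le ht0]
      exact Icc_subset_Icc le_rfl (by linarith)
    have hprim : |primF F ((1 + y)/2 - x) - primF G ((1 + y)/2 - x)| ≤ (1 - x)/2 * B := by
      have : primF F ((1 + y)/2 - x) - primF G ((1 + y)/2 - x)
          = ∫ z in (0:ℝ)..((1+y)/2 - x), (F z - G z) := by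
        rw [intervalIntegral.integral_sub hFt hGt]; rfl
      rw [this]
      have hb := intervalIntegral.norm_integral_le_of_norm_le_const
        (f := fun z => F z - G z) (a := 0) (b := (1+y)/2 - x) (C := B) ?_
      · rw [Real.norm_eq_abs] at hb
        calc |∫ z in (0:ℝ)..((1+y)/2 - x), (F z - G z)| ≤ B * |(1+y)/2 - x - 0| := hb
          _ ≤ (1 - x)/2 * B := by
              rw [sub_zero, abs_of_nonneg ht0]
              nlinarith
      · intro z hz
        rw [uIoc_of_le ht0] at hz
        obtain ⟨hz1, hz2⟩ := hz
        exact hB z ⟨le_of_lt hz1, by linarith⟩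
    calc |y ^ (n-2) * primF F ((1 + y)/2 - x) - y ^ (n-2) * primF G ((1 + y)/2 - x)|
        = y ^ (n-2) * |primF F ((1 + y)/2 - x) - primF G ((1 + y)/2 - x)| := by
          rw [← mul_sub, abs_mul, abs_of_nonneg (by positivity)]
      _ ≤ y ^ (n-2) * ((1 - x)/2 * B) := by
          apply mul_le_mul_of_nonneg_left hprim (by positivity)
  -- integral bound
  have hIbound : |∫ y in l..x, (y ^ (n-2) * primF F ((1 + y)/2 - x) - y ^ (n-2) * primF G ((1 + y)/2 - x))|
      ≤ (1 - x)/2 * B * (x ^ (n-1) / ((n:ℝ) - 1)) := by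
    have h1 : |∫ y in l..x, (y ^ (n-2) * primF F ((1 + y)/2 - x) - y ^ (n-2) * primF G ((1 + y)/2 - x))|
        ≤ ∫ y in l..x, |y ^ (n-2) * primF F ((1 + y)/2 - x) - y ^ (n-2) * primF G ((1 + y)/2 - x)| := by
      have := intervalIntegral.norm_integral_le_integral_norm
        (f := fun y => y ^ (n-2) * primF F ((1 + y)/2 - x) - y ^ (n-2) * primF G ((1 + y)/2 - x))
        (μ := volume) hlx
      simpa [Real.norm_eq_abs] using this
    have h2 : ∫ y in l..x, |y ^ (n-2) * primF F ((1 + y)/2 - x) - y ^ (n-2) * primF G ((1 + y)/2 - x)|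
        ≤ ∫ y in l..x, y ^ (n-2) * ((1 - x)/2 * B) := by
      apply intervalIntegral.integral_mono_on hlx _ _ hpoint
      · exact (hu.sub hv).abs
      · apply ContinuousOn.intervalIntegrable
        exact ((continuous_pow _).mul continuous_const).continuousOn
    have h3 : ∫ y in l..x, y ^ (n-2) * ((1 - x)/2 * B) = ((1 - x)/2 * B) * ((x ^ (n-1) - l ^ (n-1)) / ((n:ℝ) - 1)) := by
      have : ∀ y : ℝ, y ^ (n-2) * ((1 - x)/2 * B) = ((1 - x)/2 * B) * y ^ (n-2) := fun y => by ring
      simp_rw [this]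
      rw [intervalIntegral.integral_const_mul, integral_pow]
      have hnn : n - 2 + 1 = n - 1 := by omega
      have hc : ((n - 2 : ℕ) : ℝ) + 1 = (n : ℝ) - 1 := by
        have : ((n - 2 : ℕ) : ℝ) = (n : ℝ) - 2 := by
          have := Nat.cast_sub (by omega : 2 ≤ n) (R := ℝ); push_cast at this ⊢; linarith
        rw [this]; ring
      rw [hnn, hc]
    have hn1 : (0:ℝ) < (n:ℝ) - 1 := by
      have : (2:ℝ) ≤ (n:ℝ) := by exact_mod_cast hn
      linarith
    have h4 : ((1 - x)/2 * B) * ((x ^ (n-1) - l ^ (n-1)) / ((n:ℝ) - 1))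
        ≤ (1 - x)/2 * B * (x ^ (n-1) / ((n:ℝ) - 1)) := by
      apply mul_le_mul_of_nonneg_left _ (mul_nonneg (by linarith) hB0)
      gcongr
      have : (0:ℝ) ≤ l ^ (n-1) := pow_nonneg hl0 _
      linarith
    linarith
  -- final computation
  have hn2 : (2:ℝ) ≤ (n:ℝ) := by exact_mod_cast hn
  have hcoef0 : (0:ℝ) ≤ 2 * (n:ℝ) * ((n:ℝ) - 1) := by nlinarith
  rw [hdiff, abs_neg, abs_mul, abs_of_nonneg hcoef0]
  calc 2 * (n:ℝ) * ((n:ℝ) - 1) * |∫ y in l..x, (y ^ (n-2) * primF F ((1 + y)/2 - x) - y ^ (n-2) * primF G ((1 + y)/2 - x))|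
      ≤ 2 * (n:ℝ) * ((n:ℝ) - 1) * ((1 - x)/2 * B * (x ^ (n-1) / ((n:ℝ) - 1))) :=
        mul_le_mul_of_nonneg_left hIbound hcoef0
    _ = ((n:ℝ) * x ^ (n-1) * (1 - x)) * B := by
        have hn1 : ((n:ℝ) - 1) ≠ 0 := by
          have : (2:ℝ) ≤ (n:ℝ) := by exact_mod_cast hn
          linarith
        field_simp
    _ ≤ (1/2) * B := mul_le_mul_of_nonneg_right (pow_ineq n hn hx0 hx1) hB0
    _ = B / 2 := by ring

lemma clamp_mem (x : ℝ) : max 0 (min x 1) ∈ Icc (0:ℝ) 1 :=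
  ⟨le_max_left _ _, max_le zero_le_one (min_le_right x 1)⟩

lemma clamp_eq {x : ℝ} (hx : x ∈ Icc (0:ℝ) 1) : max 0 (min x 1) = x := by
  rw [min_eq_left hx.2, max_eq_right hx.1]

lemma core_continuous (n : ℕ) (F : ℝ → ℝ) (hF : Continuous F) : Continuous (coreF n F) := by
  have hprim : Continuous (primF F) := by
    unfold primF
    simpa [primF] using
      intervalIntegral.continuous_primitive (fun a b => hF.intervalIntegrable a b) 0
  have hf : Continuous (Function.uncurry
      (fun (x y : ℝ) => y ^ (n-2) * primF F ((1 + y)/2 - x))) := by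
    apply Continuous.mul
    · exact continuous_snd.pow _
    · exact hprim.comp (by continuity)
  have hG1 : Continuous fun x : ℝ => ∫ y in (0:ℝ)..x, y ^ (n-2) * primF F ((1 + y)/2 - x) :=
    intervalIntegral.continuous_parametric_intervalIntegral_of_continuous hf continuous_id
  have hG2 : Continuous fun x : ℝ =>
      ∫ y in (0:ℝ)..(max (2*x - 1) 0), y ^ (n-2) * primF F ((1 + y)/2 - x) :=
    intervalIntegral.continuous_parametric_intervalIntegral_of_continuous hf (by continuity)
  have hsplit : coreF n F = fun x =>
      (n : ℝ) * x ^ (n-1) - ((n : ℝ) - 1) * x ^ n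
        - 2 * (n : ℝ) * ((n : ℝ) - 1) *
          ((∫ y in (0:ℝ)..x, y ^ (n-2) * primF F ((1 + y)/2 - x))
            - ∫ y in (0:ℝ)..(max (2*x - 1) 0), y ^ (n-2) * primF F ((1 + y)/2 - x)) := by
    funext x
    unfold coreF
    have hint : ∀ a b : ℝ, IntervalIntegrable
        (fun y => y ^ (n-2) * primF F ((1 + y)/2 - x)) volume a b := by
      intro a b
      exact (Continuous.intervalIntegrable (by
        exact (continuous_pow _).mul (hprim.comp (by continuity))) a b)
    rw [intervalIntegral.integral_interval_sub_left (hint 0 x) (hint 0 (max (2*x-1) 0))]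
  rw [hsplit]
  apply Continuous.sub
  · apply Continuous.sub <;> continuity
  · exact continuous_const.mul (hG1.sub hG2)

lemma TT_bound (n : ℕ) (F : ℝ → ℝ) (hF : Continuous F) :
    ∃ C : ℝ, ∀ x y : ℝ, dist (coreF n F (max 0 (min x 1))) (coreF n F (max 0 (min y 1))) ≤ C := by
  obtain ⟨C, hC⟩ := Metric.isBounded_iff.mp
    ((isCompact_Icc.image (core_continuous n F hF)).isBounded)
  exact ⟨C, fun x y => hC (mem_image_of_mem _ (clamp_mem x)) (mem_image_of_mem _ (clamp_mem y))⟩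

noncomputable def TT (n : ℕ) (F : ℝ →ᵇ ℝ) : ℝ →ᵇ ℝ :=
  BoundedContinuousFunction.mkOfBound
    ⟨fun x => coreF n F (max 0 (min x 1)),
      (core_continuous n F F.continuous).comp (continuous_const.max (continuous_id.min continuous_const))⟩
    (Classical.choose (TT_bound n F F.continuous))
    (Classical.choose_spec (TT_bound n F F.continuous))

lemma TT_apply (n : ℕ) (F : ℝ →ᵇ ℝ) (x : ℝ) : TT n F x = coreF n F (max 0 (min x 1)) := rfl


lemma TT_contract (n : ℕ) (hn : 2 ≤ n) : ContractingWith (1/2 : NNReal) (TT n) := by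
  constructor
  · exact NNReal.coe_lt_coe.mp (by norm_num)
  · apply LipschitzWith.of_dist_le_mul
    intro F G
    rw [BoundedContinuousFunction.dist_le (by positivity)]
    intro x
    rw [TT_apply, TT_apply, Real.dist_eq]
    have h := core_diff_bound n hn F G (F.continuous.integrableOn_Icc)
      (G.continuous.integrableOn_Icc) (dist F G)
      (fun z _ => by rw [← Real.dist_eq]; exact BoundedContinuousFunction.dist_coe_le_dist z)
      (clamp_mem x)
    calc |coreF n (⇑F) (max 0 (min x 1)) - coreF n (⇑G) (max 0 (min x 1))| ≤ dist F G / 2 := h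
      _ = ((1/2 : NNReal) : ℝ) * dist F G := by push_cast; ring

theorem stmt_19 (n : ℕ) (hn : 2 ≤ n) :
    ∃ F : ℝ → ℝ,
      (Measurable F ∧ (∃ C : ℝ, ∀ x ∈ Icc (0:ℝ) 1, |F x| ≤ C) ∧
        ∀ x ∈ Icc (0:ℝ) 1,
          F x = (n:ℝ) * x ^ (n-1) - ((n:ℝ) - 1) * x ^ n
            - 2 * (n:ℝ) * ((n:ℝ) - 1) *
              ∫ y in (max (2*x - 1) 0)..x, y ^ (n-2) * ∫ z in (0:ℝ)..((1 + y)/2 - x), F z) ∧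
      ∀ G : ℝ → ℝ,
        (Measurable G ∧ (∃ C : ℝ, ∀ x ∈ Icc (0:ℝ) 1, |G x| ≤ C) ∧
          ∀ x ∈ Icc (0:ℝ) 1,
            G x = (n:ℝ) * x ^ (n-1) - ((n:ℝ) - 1) * x ^ n
              - 2 * (n:ℝ) * ((n:ℝ) - 1) *
                ∫ y in (max (2*x - 1) 0)..x, y ^ (n-2) * ∫ z in (0:ℝ)..((1 + y)/2 - x), G z) →
        ∀ x ∈ Icc (0:ℝ) 1, G x = F x := by
  have hctr := TT_contract n hn
  set Φ : ℝ →ᵇ ℝ := ContractingWith.fixedPoint (TT n) hctr with hΦdef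
  have hfix : TT n Φ = Φ := ContractingWith.fixedPoint_isFixedPt hctr
  have hΦeq : ∀ z ∈ Icc (0:ℝ) 1, Φ z = coreF n (⇑Φ) z := by
    intro z hz
    conv_lhs => rw [← hfix]
    rw [TT_apply, clamp_eq hz]
  have hΦi : IntegrableOn (⇑Φ) (Icc (0:ℝ) 1) := Φ.continuous.integrableOn_Icc
  refine ⟨⇑Φ, ⟨Φ.continuous.measurable, ⟨‖Φ‖, fun x _ => by
      rw [← Real.norm_eq_abs]; exact Φ.norm_coe_le_norm x⟩, ?_⟩, ?_⟩
  · intro x hx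
    rw [hΦeq x hx]
    simp only [coreF, primF]
  · rintro G ⟨hGm, ⟨C, hGC⟩, hGeq⟩ z hz
    have hGi : IntegrableOn G (Icc (0:ℝ) 1) := by
      refine Integrable.mono' (integrable_const C) hGm.aestronglyMeasurable.restrict ?_
      refine (ae_restrict_iff' measurableSet_Icc).mpr (Filter.Eventually.of_forall ?_)
      intro x hx
      rw [Real.norm_eq_abs]
      exact hGC x hx
    have hGcore : ∀ x ∈ Icc (0:ℝ) 1, G x = coreF n G x := by
      intro x hx
      rw [hGeq x hx]
      simp only [coreF, primF]
    set D : ℝ := C + ‖Φ‖ with hD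
    have hDb : ∀ x ∈ Icc (0:ℝ) 1, |G x - Φ x| ≤ D := by
      intro x hx
      calc |G x - Φ x| ≤ |G x| + |Φ x| := abs_sub _ _
        _ ≤ C + ‖Φ‖ := add_le_add (hGC x hx)
            (by rw [← Real.norm_eq_abs]; exact Φ.norm_coe_le_norm x)
    have key : ∀ k : ℕ, ∀ x ∈ Icc (0:ℝ) 1, |G x - Φ x| ≤ D / 2 ^ k := by
      intro k
      induction k with
      | zero => simpa using hDb
      | succ k ih =>
        intro x hx
        rw [hGcore x hx, hΦeq x hx]
        have h := core_diff_bound n hn G (⇑Φ) hGi hΦi (D / 2 ^ k) ih hx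
        calc |coreF n G x - coreF n (⇑Φ) x| ≤ (D / 2 ^ k) / 2 := h
          _ = D / 2 ^ (k+1) := by ring
    have hD0 : 0 ≤ D := le_trans (abs_nonneg _) (hDb 0 (by norm_num))
    have hzero : |G z - Φ z| ≤ 0 := by
      by_contra hcon
      push_neg at hcon
      obtain ⟨k, hk⟩ := exists_pow_lt_of_lt_one
        (div_pos hcon (by linarith : (0:ℝ) < D + 1)) (by norm_num : (1/2 : ℝ) < 1)
      have h1 : D / 2 ^ k ≤ (D + 1) * (1/2) ^ k := by
        have e : (1/2:ℝ) ^ k = 1 / 2 ^ k := by rw [div_pow, one_pow]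
        rw [e, mul_one_div]
        gcongr
        linarith
      have h2 : (D + 1) * (1/2) ^ k < |G z - Φ z| := by
        rw [← lt_div_iff₀' (by linarith : (0:ℝ) < D + 1)]
        exact hk
      exact absurd (key k z hz) (by linarith)
    have := abs_nonneg (G z - Φ z)
    have : |G z - Φ z| = 0 := le_antisymm hzero this
    have := abs_eq_zero.mp this
    linarith [this]
end
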